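/- arXiv:math/0609454 — 4 statements merged into one kernel-verified Lean document; each statement's English description precedes it below -/
import Mathlib

section
/- There is a constant c > 0 depending only on n with the following property. Let f : ℝⁿ₊ → ℝ be locally integrable. (a) If F ∈ BMO(ℝⁿ) satisfies F = f almost everywhere on ℝⁿ₊, then the even extension f_e belongs to BMO(ℝⁿ) and ‖f_e‖_{BMO} ≤ c ‖F‖_{BMO}. (b) Consequently f admits an extension in BMO(ℝⁿ) if and only if f_e ∈ BMO(ℝⁿ), and inf{‖F‖_{BMO} : F ∈ BMO(ℝⁿ), F = f a.e. on ℝⁿ₊} ≤ ‖f_e‖_{BMO} ≤ c · inf{‖F‖_{BMO} : F ∈ BMO(ℝⁿ), F = f a.e. on ℝⁿ₊} (as extended real numbers). -/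
open MeasureTheory ENNReal Real Set

noncomputable section

/-- `ℝⁿ` with the Euclidean norm. -/
abbrev En (n : ℕ) := EuclideanSpace ℝ (Fin n)

/-- Axis-parallel cube with lower corner `a` and side length `l`. -/
def cube {n : ℕ} (a : En n) (l : ℝ) : Set (En n) :=
  {x | ∀ i, x i ∈ Set.Icc (a i) (a i + l)}

/-- The classical BMO seminorm (as an extended real number):
`sup_Q (1/|Q|) ∫_Q |f - f_Q|`, supremum over all axis-parallel cubes. -/
def bmoNorm {n : ℕ} (f : En n → ℝ) : ℝ≥0∞ :=
  ⨆ (a : En n) (l : ℝ) (_ : 0 < l),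
    (∫⁻ x in cube a l, ENNReal.ofReal |f x - ⨍ y in cube a l, f y|) / volume (cube a l)

/-- The last coordinate `x_n` of a point of `ℝ^{n+1}`. -/
def lastC {n : ℕ} (x : En (n + 1)) : ℝ := x (Fin.last n)

/-- Reflection `x̃ = (x', -x_n)` across the hyperplane `{x_n = 0}`. -/
def reflx {n : ℕ} (x : En (n + 1)) : En (n + 1) :=
  WithLp.toLp 2 (Function.update x (Fin.last n) (-(x (Fin.last n))))

/-- Upper half space `ℝⁿ₊ = {x : x_n > 0}`. -/
def upperHalf (n : ℕ) : Set (En (n + 1)) := {x | 0 < lastC x}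

/-- Lower half space `ℝⁿ₋ = {x : x_n < 0}`. -/
def lowerHalf (n : ℕ) : Set (En (n + 1)) := {x | lastC x < 0}

/-- Even extension of a function given on the upper half space. -/
def evenExt {n : ℕ} (f : En (n + 1) → ℝ) : En (n + 1) → ℝ :=
  fun x => if 0 < lastC x then f x else f (reflx x)

/-- Odd extension of a function given on the upper half space. -/
def oddExt {n : ℕ} (f : En (n + 1) → ℝ) : En (n + 1) → ℝ :=
  fun x => if 0 < lastC x then f x else -f (reflx x)

/-- Zero extension of a function given on the upper half space. -/
def zeroExt {n : ℕ} (f : En (n + 1) → ℝ) : En (n + 1) → ℝ :=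
  fun x => if 0 < lastC x then f x else 0

end


noncomputable section Helpers

open Function

variable {m n : ℕ}

lemma cube_eq_preimage (a : En m) (l : ℝ) :
    cube a l = (MeasurableEquiv.toLp 2 (Fin m → ℝ)).symm ⁻¹' (univ.pi fun i => Icc (a i) (a i + l)) := by
  ext x
  simp [cube, Set.mem_pi, Pi.le_def, forall_and, MeasurableEquiv.coe_toLp_symm]

lemma measurableSet_cube (a : En m) (l : ℝ) : MeasurableSet (cube a l) := by
  rw [cube_eq_preimage]
  exact (MeasurableEquiv.measurable _) (MeasurableSet.univ_pi fun i => measurableSet_Icc)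

lemma volume_cube (a : En m) (l : ℝ) :
    volume (cube a l) = ENNReal.ofReal l ^ m := by
  rw [cube_eq_preimage,
    (EuclideanSpace.volume_preserving_symm_measurableEquiv_toLp (Fin m)).measure_preimage
      (MeasurableSet.univ_pi fun i => measurableSet_Icc).nullMeasurableSet,
    volume_pi_pi]
  simp [Real.volume_Icc]

lemma volume_cube_ne_zero (a : En m) {l : ℝ} (hl : 0 < l) : volume (cube a l) ≠ 0 := by
  rw [volume_cube]
  exact pow_ne_zero _ (by simpa using (ENNReal.ofReal_pos.2 hl).ne')

lemma volume_cube_ne_top (a : En m) (l : ℝ) : volume (cube a l) ≠ ⊤ := by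
  rw [volume_cube]
  exact ENNReal.pow_ne_top ENNReal.ofReal_ne_top

lemma isCompact_cube (a : En m) (l : ℝ) : IsCompact (cube a l) := by
  have h : cube a l = (PiLp.continuousLinearEquiv 2 ℝ (fun _ : Fin m => ℝ)).toHomeomorph ⁻¹'
      (univ.pi fun i => Icc (a i) (a i + l)) := by
    ext x
    simp [cube, Set.mem_pi, Pi.le_def, forall_and]
  rw [h, ← Homeomorph.image_symm]
  exact (isCompact_univ_pi fun i => isCompact_Icc).image (Homeomorph.continuous _)

lemma reflx_apply (x : En (n + 1)) (i : Fin (n + 1)) :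
    reflx x i = if i = Fin.last n then -(x i) else x i := by
  rw [reflx, PiLp.toLp_apply, Function.update_apply]
  split
  · rename_i h; rw [h]
  · rfl

lemma reflx_reflx (x : En (n + 1)) : reflx (reflx x) = x := by
  ext i
  simp only [reflx_apply]
  split <;> simp

lemma lastC_reflx (x : En (n + 1)) : lastC (reflx x) = -(lastC x) := by
  simp [lastC, reflx_apply]

lemma measurePreserving_reflx : MeasurePreserving (reflx (n := n)) volume volume := by
  classical
  set g : Fin (n+1) → ℝ → ℝ := fun i t => if i = Fin.last n then -t else t with hg
  have hgi : ∀ i, MeasurePreserving (g i) volume volume := by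
    intro i
    by_cases h : i = Fin.last n
    · simpa [hg, h] using Measure.measurePreserving_neg (volume : Measure ℝ)
    · simp only [hg, h, if_false]; exact MeasurePreserving.id (volume : Measure ℝ)
  have hN : MeasurePreserving (fun (x : Fin (n+1) → ℝ) (i : Fin (n+1)) => g i (x i))
      volume volume := volume_preserving_pi hgi
  have e := EuclideanSpace.volume_preserving_symm_measurableEquiv_toLp (Fin (n+1))
  have comp := (e.symm ((MeasurableEquiv.toLp 2 (Fin (n+1) → ℝ)).symm)).comp (hN.comp e)
  have heq : (⇑((MeasurableEquiv.toLp 2 (Fin (n + 1) → ℝ)).symm).symm ∘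
      (fun x i => g i (x i)) ∘ ⇑((MeasurableEquiv.toLp 2 (Fin (n + 1) → ℝ)).symm)) = reflx (n := n) := by
    funext x
    ext i
    show (((MeasurableEquiv.toLp 2 (Fin (n+1) → ℝ)).symm).symm
      (fun i => g i (((MeasurableEquiv.toLp 2 (Fin (n+1) → ℝ)).symm) x i))) i = reflx x i
    rw [reflx_apply]
    rfl
  rwa [heq] at comp

def reflxEquiv : En (n + 1) ≃ᵐ En (n + 1) where
  toFun := reflx
  invFun := reflx
  left_inv := reflx_reflx
  right_inv := reflx_reflx
  measurable_toFun := measurePreserving_reflx.measurable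
  measurable_invFun := measurePreserving_reflx.measurable

lemma measurableEmbedding_reflx : MeasurableEmbedding (reflx (n := n)) :=
  (reflxEquiv (n := n)).measurableEmbedding

lemma reflx_preimage_cube (b : En (n + 1)) (l : ℝ) :
    reflx ⁻¹' (cube b l) = cube (WithLp.toLp 2 (Function.update b (Fin.last n) (-(b (Fin.last n)) - l))) l := by
  classical
  ext x
  simp only [cube, mem_preimage, mem_setOf_eq, reflx_apply, PiLp.toLp_apply, Function.update_apply, mem_Icc]
  constructor
  · intro h i
    by_cases hi : i = Fin.last n
    · have := h i
      subst hi
      simp at this ⊢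
      constructor <;> linarith [this.1, this.2]
    · have := h i
      simpa [hi] using this
  · intro h i
    by_cases hi : i = Fin.last n
    · have := h i
      subst hi
      simp at this ⊢
      constructor <;> linarith [this.1, this.2]
    · have := h i
      simpa [hi] using this

lemma measurable_lastC : Measurable (lastC (n := n)) := by
  have : lastC (n := n) = (fun p : Fin (n+1) → ℝ => p (Fin.last n)) ∘
      ((MeasurableEquiv.toLp 2 (Fin (n+1) → ℝ)).symm) := rfl
  rw [this]
  exact (measurable_pi_apply _).comp ((MeasurableEquiv.toLp 2 (Fin (n+1) → ℝ)).symm).measurable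

lemma volume_hyperplane : volume {x : En (n + 1) | lastC x = 0} = 0 := by
  classical
  have h : {x : En (n + 1) | lastC x = 0} =
      ((MeasurableEquiv.toLp 2 (Fin (n+1) → ℝ)).symm) ⁻¹'
        (univ.pi fun i => if i = Fin.last n then ({0} : Set ℝ) else univ) := by
    ext x
    simp only [mem_setOf_eq, mem_preimage, mem_pi, mem_univ, forall_true_left]
    constructor
    · intro h i
      by_cases hi : i = Fin.last n <;> simp [hi]
      · subst hi; exact h
    · intro h
      have := h (Fin.last n)
      simpa [lastC] using this
  rw [h, (EuclideanSpace.volume_preserving_symm_measurableEquiv_toLp (Fin (n+1))).measure_preimage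
      (MeasurableSet.univ_pi fun i => by split <;> exact (by measurability)).nullMeasurableSet,
    volume_pi_pi]
  refine Finset.prod_eq_zero (Finset.mem_univ (Fin.last n)) ?_
  simp

lemma ae_lastC_ne : ∀ᵐ x : En (n + 1), lastC x ≠ 0 := by
  rw [MeasureTheory.ae_iff]
  have : {x : En (n+1) | ¬ lastC x ≠ 0} = {x : En (n+1) | lastC x = 0} := by
    ext x; simp
  rw [this]
  exact volume_hyperplane

lemma measurableSet_upperHalf : MeasurableSet (upperHalf n) :=
  measurableSet_lt measurable_const measurable_lastC

lemma measurableSet_lowerHalf : MeasurableSet (lowerHalf n) :=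
  measurableSet_lt measurable_lastC measurable_const

/-- oscillation w.r.t. the average is at most twice the oscillation w.r.t. any constant. -/
lemma osc_le {α : Type*} [MeasurableSpace α] {μ : Measure α}
    (s : Set α) (h0 : μ s ≠ 0) (hfin : μ s ≠ ⊤) (g : α → ℝ)
    (hg : IntegrableOn g s μ) (c₀ : ℝ) :
    ∫⁻ x in s, ENNReal.ofReal |g x - ⨍ y in s, g y ∂μ| ∂μ ≤
      2 * ∫⁻ x in s, ENNReal.ofReal |g x - c₀| ∂μ := by
  set A := ⨍ y in s, g y ∂μ with hA
  set T := (μ s).toReal with hT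
  have hT0 : 0 < T := ENNReal.toReal_pos h0 hfin
  have hgc : IntegrableOn (fun x => g x - c₀) s μ :=
    hg.sub (integrableOn_const hfin)
  have habs : IntegrableOn (fun x => |g x - c₀|) s μ := hgc.abs
  have hint : ∫ x in s, (fun x => c₀) x ∂μ = T * c₀ := by
    rw [setIntegral_const]; simp [hT, smul_eq_mul, Measure.real]
  have key : |A - c₀| * T ≤ ∫ x in s, |g x - c₀| ∂μ := by
    have hAc : A - c₀ = T⁻¹ * ∫ x in s, (g x - c₀) ∂μ := by
      rw [hA, setAverage_eq, smul_eq_mul,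
        integral_sub hg (integrableOn_const hfin), hint]
      rw [show μ.real s = T from rfl]
      field_simp
    have h1 : |A - c₀| ≤ T⁻¹ * ∫ x in s, |g x - c₀| ∂μ := by
      rw [hAc, abs_mul, abs_of_nonneg (inv_nonneg.2 hT0.le)]
      gcongr
      calc |∫ x in s, (g x - c₀) ∂μ| = ‖∫ x in s, (g x - c₀) ∂μ‖ := (Real.norm_eq_abs _).symm
        _ ≤ ∫ x in s, ‖g x - c₀‖ ∂μ := norm_integral_le_integral_norm _
        _ = ∫ x in s, |g x - c₀| ∂μ := by simp [Real.norm_eq_abs]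
    calc |A - c₀| * T ≤ (T⁻¹ * ∫ x in s, |g x - c₀| ∂μ) * T := by gcongr
      _ = ∫ x in s, |g x - c₀| ∂μ := by field_simp
  have hconst : ENNReal.ofReal |A - c₀| * μ s ≤ ∫⁻ x in s, ENNReal.ofReal |g x - c₀| ∂μ := by
    have h2 : ∫⁻ x in s, ENNReal.ofReal |g x - c₀| ∂μ
        = ENNReal.ofReal (∫ x in s, |g x - c₀| ∂μ) := by
      rw [ofReal_integral_eq_lintegral_ofReal habs
        (Filter.Eventually.of_forall fun x => abs_nonneg _)]
    rw [h2, ← ENNReal.ofReal_toReal hfin, ← hT, ← ENNReal.ofReal_mul (abs_nonneg _)]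
    exact ENNReal.ofReal_le_ofReal key
  calc ∫⁻ x in s, ENNReal.ofReal |g x - A| ∂μ
      ≤ ∫⁻ x in s, (ENNReal.ofReal |g x - c₀| + ENNReal.ofReal |A - c₀|) ∂μ := by
        refine lintegral_mono fun x => ?_
        refine le_trans (ENNReal.ofReal_le_ofReal ?_) (ENNReal.ofReal_add_le)
        calc |g x - A| ≤ |g x - c₀| + |c₀ - A| := abs_sub_le _ _ _
          _ = |g x - c₀| + |A - c₀| := by rw [abs_sub_comm c₀ A]
    _ = ∫⁻ x in s, ENNReal.ofReal |g x - c₀| ∂μ + ENNReal.ofReal |A - c₀| * μ s := by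
        rw [lintegral_add_right _ measurable_const, setLIntegral_const]
    _ ≤ ∫⁻ x in s, ENNReal.ofReal |g x - c₀| ∂μ + ∫⁻ x in s, ENNReal.ofReal |g x - c₀| ∂μ := by
        gcongr
    _ = 2 * ∫⁻ x in s, ENNReal.ofReal |g x - c₀| ∂μ := by ring

lemma bmo_term_le (F : En m → ℝ) (a : En m) {l : ℝ} (hl : 0 < l) :
    ∫⁻ x in cube a l, ENNReal.ofReal |F x - ⨍ y in cube a l, F y|
      ≤ bmoNorm F * volume (cube a l) := by
  have h1 : (∫⁻ x in cube a l, ENNReal.ofReal |F x - ⨍ y in cube a l, F y|)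
      / volume (cube a l) ≤ bmoNorm F :=
    le_iSup_of_le a (le_iSup_of_le l (le_iSup_of_le hl le_rfl))
  calc ∫⁻ x in cube a l, ENNReal.ofReal |F x - ⨍ y in cube a l, F y|
      = ((∫⁻ x in cube a l, ENNReal.ofReal |F x - ⨍ y in cube a l, F y|)
          / volume (cube a l)) * volume (cube a l) :=
        (ENNReal.div_mul_cancel (volume_cube_ne_zero a hl) (volume_cube_ne_top a l)).symm
    _ ≤ bmoNorm F * volume (cube a l) := mul_le_mul_left h1 _

lemma evenExt_ae_upper {f F : En (n + 1) → ℝ}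
    (hFf : ∀ᵐ x ∂(volume.restrict (upperHalf n)), F x = f x) :
    ∀ᵐ x : En (n + 1), 0 < lastC x → evenExt f x = F x := by
  have hup : ∀ᵐ x : En (n + 1), 0 < lastC x → F x = f x := by
    have := (ae_restrict_iff' measurableSet_upperHalf).1 hFf
    exact this
  exact hup.mono fun x h hx => by rw [evenExt, if_pos hx, h hx]

lemma evenExt_ae_lower {f F : En (n + 1) → ℝ}
    (hFf : ∀ᵐ x ∂(volume.restrict (upperHalf n)), F x = f x) :
    ∀ᵐ x : En (n + 1), lastC x < 0 → evenExt f x = F (reflx x) := by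
  have hup : ∀ᵐ x : En (n + 1), 0 < lastC x → F x = f x :=
    (ae_restrict_iff' measurableSet_upperHalf).1 hFf
  have hup' : ∀ᵐ x : En (n + 1), 0 < lastC (reflx x) → F (reflx x) = f (reflx x) :=
    (measurePreserving_reflx.quasiMeasurePreserving).ae hup
  refine hup'.mono fun x h hx => ?_
  have hpos : 0 < lastC (reflx x) := by rw [lastC_reflx]; linarith
  rw [evenExt, if_neg (by linarith), h hpos]

end Helpers

noncomputable section Main

variable {n : ℕ}

lemma integrableOn_evenExt_cube {f F : En (n + 1) → ℝ}
    (hFloc : LocallyIntegrable F volume)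
    (hFf : ∀ᵐ x ∂(volume.restrict (upperHalf n)), F x = f x)
    (a : En (n + 1)) (l : ℝ) :
    IntegrableOn (evenExt f) (cube a l) volume := by
  classical
  set i₀ := Fin.last n with hi₀
  set Q := cube a l with hQ
  have hQm : MeasurableSet Q := measurableSet_cube a l
  set s₁ := Q ∩ {x : En (n+1) | 0 < lastC x} with hs₁
  set s₂ := Q ∩ {x : En (n+1) | lastC x < 0} with hs₂
  have hs₁m : MeasurableSet s₁ := hQm.inter (measurableSet_lt measurable_const measurable_lastC)
  have hs₂m : MeasurableSet s₂ := hQm.inter (measurableSet_lt measurable_lastC measurable_const)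
  have hcongr₁ : ∀ᵐ x ∂(volume.restrict s₁), evenExt f x = F x := by
    rw [ae_restrict_iff' hs₁m]
    exact (evenExt_ae_upper hFf).mono fun x h hx => h hx.2
  have hcongr₂ : ∀ᵐ x ∂(volume.restrict s₂), evenExt f x = F (reflx x) := by
    rw [ae_restrict_iff' hs₂m]
    exact (evenExt_ae_lower hFf).mono fun x h hx => h hx.2
  have hFQ : IntegrableOn F Q volume := hFloc.integrableOn_isCompact (isCompact_cube a l)
  have hcongr₁' : evenExt f =ᵐ[volume.restrict s₁] F := hcongr₁
  have hint₁ : IntegrableOn (evenExt f) s₁ volume :=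
    (hFQ.mono_set inter_subset_left).congr hcongr₁'.symm
  -- reflected cube
  set aR : En (n+1) := WithLp.toLp 2 (Function.update a i₀ (-(a i₀) - l)) with haR
  have hup' : WithLp.toLp 2 (Function.update aR (Fin.last n) (-(aR (Fin.last n)) - l)) = a := by
    ext i
    by_cases hi : i = Fin.last n
    · subst hi
      simp [haR, hi₀, Function.update_self]
    · simp [haR, hi₀, Function.update_of_ne hi]
  have hpre : reflx ⁻¹' (cube aR l) = Q := by
    rw [reflx_preimage_cube, hup']
  have hFQ' : IntegrableOn F (cube aR l) volume :=
    hFloc.integrableOn_isCompact (isCompact_cube aR l)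
  have hFr : IntegrableOn (F ∘ reflx) Q volume := by
    rw [← hpre]
    exact (measurePreserving_reflx.integrableOn_comp_preimage measurableEmbedding_reflx).2 hFQ'
  have hcongr₂' : evenExt f =ᵐ[volume.restrict s₂] (F ∘ reflx) := hcongr₂
  have hint₂ : IntegrableOn (evenExt f) s₂ volume :=
    (hFr.mono_set inter_subset_left).congr hcongr₂'.symm
  have hint₃ : IntegrableOn (evenExt f) (Q ∩ {x : En (n+1) | lastC x = 0}) volume := by
    have h0 : volume (Q ∩ {x : En (n+1) | lastC x = 0}) = 0 :=
      measure_mono_null inter_subset_right volume_hyperplane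
    have : volume.restrict (Q ∩ {x : En (n+1) | lastC x = 0}) = 0 :=
      Measure.restrict_eq_zero.2 h0
    rw [IntegrableOn, this]
    exact integrable_zero_measure
  refine ((hint₁.union hint₂).union hint₃).mono_set ?_
  intro x hx
  rcases lt_trichotomy (lastC x) 0 with h | h | h
  · exact Or.inl (Or.inr ⟨hx, h⟩)
  · exact Or.inr ⟨hx, h⟩
  · exact Or.inl (Or.inl ⟨hx, h⟩)

lemma key_estimate {f F : En (n + 1) → ℝ}
    (hFloc : LocallyIntegrable F volume)
    (hFf : ∀ᵐ x ∂(volume.restrict (upperHalf n)), F x = f x)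
    (a : En (n + 1)) {l : ℝ} (hl : 0 < l) :
    ∫⁻ x in cube a l, ENNReal.ofReal |evenExt f x - ⨍ y in cube a l, evenExt f y|
      ≤ (2 : ℝ≥0∞) ^ (n + 4) * bmoNorm F * volume (cube a l) := by
  classical
  set i₀ := Fin.last n with hi₀
  set Q := cube a l with hQ
  have hQm : MeasurableSet Q := measurableSet_cube a l
  have hQ0 : volume Q ≠ 0 := volume_cube_ne_zero a hl
  have hQt : volume Q ≠ ⊤ := volume_cube_ne_top a l
  have hQint : IntegrableOn (evenExt f) Q volume := integrableOn_evenExt_cube hFloc hFf a l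
  have hU := evenExt_ae_upper hFf
  have hL := evenExt_ae_lower hFf
  -- main bound w.r.t. a suitable constant
  obtain ⟨c₀, hb⟩ : ∃ c₀ : ℝ, ∫⁻ x in Q, ENNReal.ofReal |evenExt f x - c₀|
      ≤ (2 : ℝ≥0∞) ^ (n + 3) * bmoNorm F * volume Q := by
    have h12 : (1 : ℝ≥0∞) ≤ 2 ^ (n + 3) := one_le_two.trans (le_self_pow₀ one_le_two (by omega))
    rcases le_or_gt 0 (a i₀) with h1 | h1
    · -- cube in the (closed) upper half space
      refine ⟨⨍ y in Q, F y, ?_⟩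
      have hae : ∀ᵐ x ∂(volume.restrict Q), evenExt f x = F x := by
        rw [ae_restrict_iff' hQm]
        refine (hU.and ae_lastC_ne).mono fun x ⟨h, hne⟩ hxQ => ?_
        have : 0 ≤ lastC x := le_trans h1 (hxQ i₀).1
        exact h (lt_of_le_of_ne this (Ne.symm hne))
      have heq : ∫⁻ x in Q, ENNReal.ofReal |evenExt f x - ⨍ y in Q, F y|
          = ∫⁻ x in Q, ENNReal.ofReal |F x - ⨍ y in Q, F y| := by
        refine lintegral_congr_ae (hae.mono fun x h => by simp only [h])
      rw [heq]
      calc ∫⁻ x in Q, ENNReal.ofReal |F x - ⨍ y in Q, F y| ≤ bmoNorm F * volume Q :=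
            bmo_term_le F a hl
        _ ≤ 2 ^ (n + 3) * bmoNorm F * volume Q := by
            rw [mul_assoc]
            exact le_mul_of_one_le_left zero_le h12
    rcases le_or_gt (a i₀ + l) 0 with h2 | h2
    · -- cube in the (closed) lower half space
      set aR : En (n+1) := WithLp.toLp 2 (Function.update a i₀ (-(a i₀) - l)) with haR
      have hup' : WithLp.toLp 2 (Function.update aR (Fin.last n) (-(aR (Fin.last n)) - l)) = a := by
        ext i
        by_cases hi : i = Fin.last n
        · subst hi
          simp [haR, hi₀, Function.update_self]
        · simp [haR, hi₀, Function.update_of_ne hi]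
      have hpre : reflx ⁻¹' (cube aR l) = Q := by
        rw [reflx_preimage_cube, hup']
      refine ⟨⨍ y in cube aR l, F y, ?_⟩
      have hae : ∀ᵐ x ∂(volume.restrict Q), evenExt f x = F (reflx x) := by
        rw [ae_restrict_iff' hQm]
        refine (hL.and ae_lastC_ne).mono fun x ⟨h, hne⟩ hxQ => ?_
        have : lastC x ≤ 0 := le_trans (hxQ i₀).2 h2
        exact h (lt_of_le_of_ne this hne)
      have heq : ∫⁻ x in Q, ENNReal.ofReal |evenExt f x - ⨍ y in cube aR l, F y|
          = ∫⁻ x in Q, ENNReal.ofReal |F (reflx x) - ⨍ y in cube aR l, F y| :=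
        lintegral_congr_ae (hae.mono fun x h => by simp only [h])
      have hchg : ∫⁻ x in Q, ENNReal.ofReal |F (reflx x) - ⨍ y in cube aR l, F y|
          = ∫⁻ y in cube aR l, ENNReal.ofReal |F y - ⨍ y in cube aR l, F y| := by
        rw [← hpre]
        exact measurePreserving_reflx.setLIntegral_comp_preimage_emb measurableEmbedding_reflx
          (fun y => ENNReal.ofReal |F y - ⨍ y in cube aR l, F y|) (cube aR l)
      rw [heq, hchg]
      have hvol : volume (cube aR l) = volume Q := by
        rw [volume_cube, hQ, volume_cube]
      calc ∫⁻ y in cube aR l, ENNReal.ofReal |F y - ⨍ y in cube aR l, F y|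
          ≤ bmoNorm F * volume (cube aR l) := bmo_term_le F aR hl
        _ = bmoNorm F * volume Q := by rw [hvol]
        _ ≤ 2 ^ (n + 3) * bmoNorm F * volume Q := by
            rw [mul_assoc]
            exact le_mul_of_one_le_left zero_le h12
    · -- straddling cube
      set astar : En (n+1) := WithLp.toLp 2 (Function.update (fun i : Fin (n+1) => a i - l/2) i₀ (-l)) with hastar
      set Qs := cube astar (2*l) with hQs
      refine ⟨⨍ y in Qs, F y, ?_⟩
      set c₀ := ⨍ y in Qs, F y with hc₀
      set s₁ := Q ∩ {x : En (n+1) | 0 < lastC x} with hs₁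
      set s₂ := Q ∩ {x : En (n+1) | lastC x < 0} with hs₂
      have hs₁m : MeasurableSet s₁ :=
        hQm.inter (measurableSet_lt measurable_const measurable_lastC)
      have hs₂m : MeasurableSet s₂ :=
        hQm.inter (measurableSet_lt measurable_lastC measurable_const)
      have hsub1 : s₁ ⊆ Qs := by
        rintro x ⟨hxQ, hx⟩ i
        rw [mem_Icc]
        have hx' : 0 < x i₀ := hx
        by_cases hi : i = i₀
        · subst hi
          rw [hastar, PiLp.toLp_apply, Function.update_self]
          have h3 := (hxQ i₀).2
          constructor <;> linarith
        · rw [hastar, PiLp.toLp_apply, Function.update_of_ne hi]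
          have h3 := (hxQ i).1
          have h4 := (hxQ i).2
          constructor <;> linarith
      have hsub2 : s₂ ⊆ reflx ⁻¹' Qs := by
        rintro x ⟨hxQ, hx⟩
        intro i
        rw [mem_Icc, reflx_apply]
        have hx' : x i₀ < 0 := hx
        by_cases hi : i = i₀
        · subst hi
          rw [if_pos rfl, hastar, PiLp.toLp_apply, Function.update_self]
          have h3 := (hxQ i₀).1
          constructor <;> linarith
        · rw [if_neg hi, hastar, PiLp.toLp_apply, Function.update_of_ne hi]
          have h3 := (hxQ i).1
          have h4 := (hxQ i).2
          constructor <;> linarith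
      have hQae : Q =ᵐ[volume] ((s₁ ∪ s₂ : Set (En (n+1)))) := by
        refine Filter.eventuallyEq_set.2 (ae_lastC_ne.mono fun x hx => ?_)
        constructor
        · intro hxQ
          rcases hx.lt_or_gt with h | h
          · exact Or.inr ⟨hxQ, h⟩
          · exact Or.inl ⟨hxQ, h⟩
        · rintro (⟨h, _⟩ | ⟨h, _⟩) <;> exact h
      have hcongr₁ : ∀ᵐ x ∂(volume.restrict s₁), evenExt f x = F x := by
        rw [ae_restrict_iff' hs₁m]
        exact hU.mono fun x h hx => h hx.2
      have hcongr₂ : ∀ᵐ x ∂(volume.restrict s₂), evenExt f x = F (reflx x) := by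
        rw [ae_restrict_iff' hs₂m]
        exact hL.mono fun x h hx => h hx.2
      have hQsvol : volume Qs = 2 ^ (n+1) * volume Q := by
        rw [hQs, volume_cube, hQ, volume_cube]
        have : ENNReal.ofReal (2*l) = 2 * ENNReal.ofReal l := by
          rw [show (2:ℝ)*l = l + l by ring, ENNReal.ofReal_add hl.le hl.le, two_mul]
        rw [this, mul_pow]
      have hterm : ∀ s : Set (En (n+1)), s ⊆ Qs →
          ∫⁻ x in s, ENNReal.ofReal |F x - c₀| ≤ bmoNorm F * volume Qs := by
        intro s hs
        calc ∫⁻ x in s, ENNReal.ofReal |F x - c₀|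
            ≤ ∫⁻ x in Qs, ENNReal.ofReal |F x - c₀| := lintegral_mono_set hs
          _ ≤ bmoNorm F * volume Qs := bmo_term_le F astar (by linarith)
      have hb1 : ∫⁻ x in s₁, ENNReal.ofReal |evenExt f x - c₀| ≤ bmoNorm F * volume Qs := by
        have : ∫⁻ x in s₁, ENNReal.ofReal |evenExt f x - c₀|
            = ∫⁻ x in s₁, ENNReal.ofReal |F x - c₀| :=
          lintegral_congr_ae (hcongr₁.mono fun x h => by simp only [h])
        rw [this]
        exact hterm s₁ hsub1
      have hb2 : ∫⁻ x in s₂, ENNReal.ofReal |evenExt f x - c₀| ≤ bmoNorm F * volume Qs := by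
        have h5 : ∫⁻ x in s₂, ENNReal.ofReal |evenExt f x - c₀|
            = ∫⁻ x in s₂, ENNReal.ofReal |F (reflx x) - c₀| :=
          lintegral_congr_ae (hcongr₂.mono fun x h => by simp only [h])
        have h6 : ∫⁻ x in s₂, ENNReal.ofReal |F (reflx x) - c₀|
            ≤ ∫⁻ x in reflx ⁻¹' Qs, ENNReal.ofReal |F (reflx x) - c₀| :=
          lintegral_mono_set hsub2
        have h7 : ∫⁻ x in reflx ⁻¹' Qs, ENNReal.ofReal |F (reflx x) - c₀|
            = ∫⁻ y in Qs, ENNReal.ofReal |F y - c₀| :=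
          measurePreserving_reflx.setLIntegral_comp_preimage_emb measurableEmbedding_reflx
            (fun y => ENNReal.ofReal |F y - c₀|) Qs
        rw [h5]
        refine le_trans h6 ?_
        rw [h7]
        exact hterm Qs subset_rfl
      calc ∫⁻ x in Q, ENNReal.ofReal |evenExt f x - c₀|
          = ∫⁻ x in s₁ ∪ s₂, ENNReal.ofReal |evenExt f x - c₀| := setLIntegral_congr hQae
        _ ≤ (∫⁻ x in s₁, ENNReal.ofReal |evenExt f x - c₀|)
            + ∫⁻ x in s₂, ENNReal.ofReal |evenExt f x - c₀| := lintegral_union_le _ _ _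
        _ ≤ bmoNorm F * volume Qs + bmoNorm F * volume Qs := add_le_add hb1 hb2
        _ = 2 * (bmoNorm F * volume Qs) := by ring
        _ = 2 ^ (n + 2) * bmoNorm F * volume Q := by
            rw [hQsvol]; ring
        _ ≤ 2 ^ (n + 3) * bmoNorm F * volume Q := by
            gcongr
            · exact one_le_two
            · omega
  calc ∫⁻ x in Q, ENNReal.ofReal |evenExt f x - ⨍ y in Q, evenExt f y|
      ≤ 2 * ∫⁻ x in Q, ENNReal.ofReal |evenExt f x - c₀| :=
        osc_le Q hQ0 hQt (evenExt f) hQint c₀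
    _ ≤ 2 * ((2 : ℝ≥0∞) ^ (n + 3) * bmoNorm F * volume Q) := by gcongr
    _ = (2 : ℝ≥0∞) ^ (n + 4) * bmoNorm F * volume Q := by ring

lemma bmo_evenExt_le {f F : En (n + 1) → ℝ}
    (hFloc : LocallyIntegrable F volume)
    (hFf : ∀ᵐ x ∂(volume.restrict (upperHalf n)), F x = f x) :
    bmoNorm (evenExt f) ≤ (2 : ℝ≥0∞) ^ (n + 4) * bmoNorm F := by
  rw [bmoNorm]
  refine iSup_le fun a => iSup_le fun l => iSup_le fun hl => ?_
  rw [ENNReal.div_le_iff (volume_cube_ne_zero a hl) (volume_cube_ne_top a l)]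
  exact key_estimate hFloc hFf a hl

lemma abs_coord_le_norm (x : En (n + 1)) (i : Fin (n + 1)) : |x i| ≤ ‖x‖ := by
  rw [EuclideanSpace.norm_eq]
  have h1 : |x i| = Real.sqrt (‖x i‖ ^ 2) := by
    rw [Real.sqrt_sq_eq_abs, Real.norm_eq_abs, abs_abs]
  rw [h1]
  apply Real.sqrt_le_sqrt
  exact Finset.single_le_sum (fun j _ => sq_nonneg ‖x j‖) (Finset.mem_univ i)

lemma subset_cube {K : Set (En (n + 1))} (hK : IsCompact K) :
    ∃ (a : En (n+1)) (l : ℝ), 0 < l ∧ K ⊆ cube a l := by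
  obtain ⟨r, hr⟩ := hK.isBounded.subset_closedBall (0 : En (n+1))
  set r' := |r| + 1 with hr'
  have hr'0 : 0 < r' := by positivity
  refine ⟨(WithLp.toLp 2 (fun _ => -r') : En (n+1)), 2*r', by linarith, ?_⟩
  intro x hx i
  have hxr : ‖x‖ ≤ r' := by
    have := hr hx
    rw [Metric.mem_closedBall, dist_zero_right] at this
    calc ‖x‖ ≤ r := this
      _ ≤ |r| := le_abs_self r
      _ ≤ r' := by linarith
  have habs : |x i| ≤ r' := le_trans (abs_coord_le_norm x i) hxr
  rw [abs_le] at habs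
  constructor
  · exact habs.1
  · show x i ≤ -r' + 2*r'
    linarith [habs.2]

lemma locallyIntegrable_evenExt {f : En (n + 1) → ℝ}
    (hf : LocallyIntegrableOn f (upperHalf n) volume)
    (hbmo : bmoNorm (evenExt f) ≠ ⊤) :
    LocallyIntegrable (evenExt f) volume := by
  classical
  -- measurability
  have hfm : AEStronglyMeasurable f (volume.restrict (upperHalf n)) :=
    hf.aestronglyMeasurable
  have m1 : AEStronglyMeasurable (evenExt f) (volume.restrict (upperHalf n)) := by
    refine hfm.congr ?_
    exact (ae_restrict_mem measurableSet_upperHalf).mono fun x hx => (if_pos hx).symm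
  have hpre : reflx ⁻¹' (upperHalf n) = lowerHalf n := by
    ext x
    simp only [mem_preimage, upperHalf, lowerHalf, mem_setOf_eq, lastC_reflx]
    constructor <;> intro h <;> linarith
  have m2 : AEStronglyMeasurable (evenExt f) (volume.restrict (lowerHalf n)) := by
    have hmp : MeasurePreserving reflx (volume.restrict (reflx ⁻¹' (upperHalf n)))
        (volume.restrict (upperHalf n)) :=
      measurePreserving_reflx.restrict_preimage_emb measurableEmbedding_reflx _
    rw [hpre] at hmp
    have comp : AEStronglyMeasurable (f ∘ reflx) (volume.restrict (lowerHalf n)) :=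
      hfm.comp_quasiMeasurePreserving hmp.quasiMeasurePreserving
    refine comp.congr ?_
    refine (ae_restrict_mem measurableSet_lowerHalf).mono fun x hx => ?_
    have : ¬ (0 < lastC x) := by
      have hx' : lastC x < 0 := hx
      linarith
    exact (if_neg this).symm
  have m4 : AEStronglyMeasurable (evenExt f) volume := by
    have m3 : AEStronglyMeasurable (evenExt f)
        (volume.restrict (upperHalf n ∪ lowerHalf n)) := by
      refine AEStronglyMeasurable.mono_measure ?_ (Measure.restrict_union_le _ _)
      exact aestronglyMeasurable_add_measure_iff.2 ⟨m1, m2⟩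
    have hres : volume.restrict (upperHalf n ∪ lowerHalf n) = volume := by
      refine Measure.restrict_eq_self_of_ae_mem ?_
      refine ae_lastC_ne.mono fun x hx => ?_
      rcases hx.lt_or_gt with h | h
      · exact Or.inr h
      · exact Or.inl h
    rwa [hres] at m3
  -- integrability on cubes
  have hcube : ∀ (a : En (n+1)) (l : ℝ), 0 < l → IntegrableOn (evenExt f) (cube a l) volume := by
    intro a l hl
    set Q := cube a l with hQ
    set A := ⨍ y in Q, evenExt f y with hA
    have hT : ∫⁻ x in Q, ENNReal.ofReal |evenExt f x - A| < ⊤ := by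
      refine lt_of_le_of_lt (bmo_term_le (evenExt f) a hl) ?_
      exact ENNReal.mul_lt_top hbmo.lt_top (volume_cube_ne_top a l).lt_top
    have hfin : ∫⁻ x in Q, ENNReal.ofReal |evenExt f x| < ⊤ := by
      calc ∫⁻ x in Q, ENNReal.ofReal |evenExt f x|
          ≤ ∫⁻ x in Q, (ENNReal.ofReal |evenExt f x - A| + ENNReal.ofReal |A|) := by
            refine lintegral_mono fun x => ?_
            refine le_trans (ENNReal.ofReal_le_ofReal ?_) (ENNReal.ofReal_add_le)
            calc |evenExt f x| = |(evenExt f x - A) + A| := by ring_nf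
              _ ≤ |evenExt f x - A| + |A| := abs_add_le _ _
        _ = (∫⁻ x in Q, ENNReal.ofReal |evenExt f x - A|) + ENNReal.ofReal |A| * volume Q := by
            rw [lintegral_add_right _ measurable_const, setLIntegral_const]
        _ < ⊤ := by
            refine ENNReal.add_lt_top.2 ⟨hT, ?_⟩
            exact ENNReal.mul_lt_top ENNReal.ofReal_ne_top.lt_top
              (volume_cube_ne_top a l).lt_top
    refine ⟨m4.restrict, ?_⟩
    rw [hasFiniteIntegral_iff_norm]
    have : ∀ x, ENNReal.ofReal ‖evenExt f x‖ = ENNReal.ofReal |evenExt f x| := by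
      intro x; rw [Real.norm_eq_abs]
    simpa [this] using hfin
  rw [MeasureTheory.locallyIntegrable_iff]
  intro K hK
  obtain ⟨a, l, hl, hKQ⟩ := subset_cube hK
  exact (hcube a l hl).mono_set hKQ

end Main

/-- extension by even reflection is (up to a constant) the optimal
`BMO` extension of a function on the upper half space. -/
theorem stmt0 (n : ℕ) :
    ∃ c : ℝ, 0 < c ∧
      ∀ f : En (n + 1) → ℝ, LocallyIntegrableOn f (upperHalf n) volume →
        ((∀ F : En (n + 1) → ℝ, LocallyIntegrable F volume → bmoNorm F < ⊤ →
            (∀ᵐ x ∂(volume.restrict (upperHalf n)), F x = f x) →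
            bmoNorm (evenExt f) ≤ ENNReal.ofReal c * bmoNorm F) ∧
        (⨅ (F : En (n + 1) → ℝ) (_ : LocallyIntegrable F volume)
            (_ : ∀ᵐ x ∂(volume.restrict (upperHalf n)), F x = f x), bmoNorm F)
          ≤ bmoNorm (evenExt f) ∧
        bmoNorm (evenExt f)
          ≤ ENNReal.ofReal c *
            ⨅ (F : En (n + 1) → ℝ) (_ : LocallyIntegrable F volume)
              (_ : ∀ᵐ x ∂(volume.restrict (upperHalf n)), F x = f x), bmoNorm F) := by
    classical
  refine ⟨2 ^ (n + 4), by positivity, fun f hf => ?_⟩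
  have hofc : ENNReal.ofReal ((2:ℝ) ^ (n + 4)) = (2 : ℝ≥0∞) ^ (n + 4) := by
    rw [ENNReal.ofReal_pow (by norm_num)]
    norm_num
  have hc0 : ENNReal.ofReal ((2:ℝ) ^ (n + 4)) ≠ 0 := by
    rw [hofc]; positivity
  have hct : ENNReal.ofReal ((2:ℝ) ^ (n + 4)) ≠ ⊤ := ENNReal.ofReal_ne_top
  have part1 : ∀ F : En (n + 1) → ℝ, LocallyIntegrable F volume →
      (∀ᵐ x ∂(volume.restrict (upperHalf n)), F x = f x) →
      bmoNorm (evenExt f) ≤ ENNReal.ofReal (2 ^ (n + 4)) * bmoNorm F := by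
    intro F hFloc hFf
    rw [hofc]
    exact bmo_evenExt_le hFloc hFf
  refine ⟨fun F hFloc _ hFf => part1 F hFloc hFf, ?_, ?_⟩
  · -- the infimum is at most the norm of the even extension
    by_cases h : bmoNorm (evenExt f) = ⊤
    · rw [h]; exact le_top
    · have hloc : LocallyIntegrable (evenExt f) volume := locallyIntegrable_evenExt hf h
      have hae : ∀ᵐ x ∂(volume.restrict (upperHalf n)), evenExt f x = f x :=
        (ae_restrict_mem measurableSet_upperHalf).mono fun x hx => if_pos hx
      exact iInf_le_of_le (evenExt f) (iInf_le_of_le hloc (iInf_le_of_le hae le_rfl))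
  · -- the even extension is controlled by the infimum
    set I := ⨅ (F : En (n + 1) → ℝ) (_ : LocallyIntegrable F volume)
        (_ : ∀ᵐ x ∂(volume.restrict (upperHalf n)), F x = f x), bmoNorm F with hI
    have h2 : bmoNorm (evenExt f) / ENNReal.ofReal (2 ^ (n + 4)) ≤ I := by
      refine le_iInf fun F => le_iInf fun hFloc => le_iInf fun hFf => ?_
      rw [ENNReal.div_le_iff_le_mul (Or.inl hc0) (Or.inl hct)]
      rw [mul_comm]
      exact part1 F hFloc hFf
    calc bmoNorm (evenExt f)
        = bmoNorm (evenExt f) / ENNReal.ofReal (2 ^ (n + 4)) * ENNReal.ofReal (2 ^ (n + 4)) :=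
          (ENNReal.div_mul_cancel hc0 hct).symm
      _ ≤ I * ENNReal.ofReal (2 ^ (n + 4)) := mul_le_mul_left h2 _
      _ = ENNReal.ofReal (2 ^ (n + 4)) * I := mul_comm _ _
end

section
/- Let 0 < α < n and let p_t(x,y) (t > 0, x, y ∈ ℝⁿ) be measurable kernels such that for all x, y the map t ↦ p_t(x,y) is differentiable on (0,∞), with the Gaussian bounds |p_t(x,y)| ≤ C t^{−n/2} e^{−c|x−y|²/t} and |t ∂_t p_t(x,y)| ≤ C t^{−n/2} e^{−c|x−y|²/t}. Then there is a constant c′ > 0, depending only on n, α, C and c, such that for every t > 0 and all x ≠ y in ℝⁿ: ∫_0^∞ s^{α/2 − 1} | p_s(x,y) − p_{s+t}(x,y) | ds ≤ c′ t |x−y|^{α − n − 2}. (Consequently the kernel K_{α,t}(x,y) = (1/Γ(α/2)) ∫_0^∞ s^{α/2 − 1} (p_s(x,y) − p_{s+t}(x,y)) ds of the operator (I − e^{−tL}) L^{−α/2} satisfies |K_{α,t}(x,y)| ≤ c′′ |x−y|^{α−n} · t/|x−y|².) -/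
open MeasureTheory ENNReal Real Set

lemma aux_exp (m : ℕ) {z : ℝ} (hz : 0 < z) :
    Real.exp (-z) ≤ (m.factorial : ℝ) / z ^ m := by
  have h1 : z ^ m / (m.factorial : ℝ) ≤ Real.exp z := by
    calc z ^ m / (m.factorial : ℝ)
        ≤ ∑ i ∈ Finset.range (m + 1), z ^ i / (i.factorial : ℝ) := by
          refine Finset.single_le_sum (f := fun i => z ^ i / (i.factorial : ℝ)) ?_ ?_
          · intro i _; positivity
          · exact Finset.self_mem_range_succ m
      _ ≤ Real.exp z := Real.sum_le_exp_of_nonneg hz.le _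
  have h2 : (0:ℝ) < z ^ m / (m.factorial : ℝ) := by positivity
  rw [Real.exp_neg, show (m.factorial : ℝ) / z ^ m = (z ^ m / (m.factorial : ℝ))⁻¹ by
    rw [inv_div]]
  exact inv_anti₀ h2 h1

lemma aux_meas (K β : ℝ) : Measurable fun s : ℝ => ENNReal.ofReal (K * s ^ β) :=
  ((measurable_id.pow_const β).const_mul K).ennreal_ofReal

lemma aux_lint_Ioc (K β R : ℝ) (hK : 0 ≤ K) (hβ : -1 < β) (hR : 0 < R) :
    ∫⁻ s in Set.Ioc 0 R, ENNReal.ofReal (K * s ^ β)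
      = ENNReal.ofReal (K * (R ^ (β + 1) / (β + 1))) := by
  rw [← MeasureTheory.ofReal_integral_eq_lintegral_ofReal]
  · congr 1
    rw [integral_const_mul]
    congr 1
    rw [← intervalIntegral.integral_of_le hR.le, integral_rpow (Or.inl hβ),
      Real.zero_rpow (by linarith : β + 1 ≠ 0), sub_zero]
  · exact ((intervalIntegral.intervalIntegrable_rpow' hβ).1.const_mul K)
  · refine (ae_restrict_iff' measurableSet_Ioc).mpr (ae_of_all _ fun s hs => ?_)
    exact mul_nonneg hK (Real.rpow_nonneg hs.1.le β)

lemma aux_lint_Ioi (K β R : ℝ) (hK : 0 ≤ K) (hβ : β < -1) (hR : 0 < R) :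
    ∫⁻ s in Set.Ioi R, ENNReal.ofReal (K * s ^ β)
      = ENNReal.ofReal (K * (R ^ (β + 1) / (-(β + 1)))) := by
  rw [← MeasureTheory.ofReal_integral_eq_lintegral_ofReal]
  · congr 1
    rw [integral_const_mul, integral_Ioi_rpow_of_lt hβ hR]
    rw [div_neg, neg_div]
  · exact (integrableOn_Ioi_rpow_of_lt hβ hR).const_mul K
  · refine (ae_restrict_iff' measurableSet_Ioi).mpr (ae_of_all _ fun s hs => ?_)
    exact mul_nonneg hK (Real.rpow_nonneg ((hR.trans hs).le) β)

set_option maxHeartbeats 2000000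

/-- kernel estimate for `(I - e^{-tL}) L^{-α/2}`:
`∫_0^∞ s^{α/2-1} |p_s(x,y) - p_{s+t}(x,y)| ds ≤ c' t |x-y|^{α-n-2}`. -/
theorem stmt14 (n : ℕ) (C c α : ℝ) (hC : 0 < C) (hc : 0 < c)
    (hα0 : 0 < α) (hαn : α < n) :
    ∃ c' : ℝ, 0 < c' ∧
      ∀ p p' : ℝ → En n → En n → ℝ,
        (∀ t : ℝ, 0 < t → ∀ x y : En n,
          HasDerivAt (fun s : ℝ => p s x y) (p' t x y) t) →
        (∀ t : ℝ, 0 < t → ∀ x y : En n,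
          |p t x y| ≤ C * t ^ (-(n : ℝ) / 2) * Real.exp (-c * ‖x - y‖ ^ 2 / t)) →
        (∀ t : ℝ, 0 < t → ∀ x y : En n,
          |t * p' t x y| ≤ C * t ^ (-(n : ℝ) / 2) * Real.exp (-c * ‖x - y‖ ^ 2 / t)) →
        ∀ t : ℝ, 0 < t → ∀ x y : En n, x ≠ y →
          (∫⁻ s in Set.Ioi (0 : ℝ),
              ENNReal.ofReal (s ^ (α / 2 - 1) * |p s x y - p (s + t) x y|))
            ≤ ENNReal.ofReal (c' * t * ‖x - y‖ ^ (α - n - 2)) := by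
  have hnR : (0:ℝ) ≤ (n:ℝ) := Nat.cast_nonneg n
  have hnα : (0:ℝ) < (n:ℝ) - α := by linarith
  obtain ⟨m, hm⟩ : ∃ m : ℕ, m = n + 2 := ⟨_, rfl⟩
  have hmr : (m:ℝ) = (n:ℝ) + 2 := by rw [hm]; push_cast; ring
  obtain ⟨M, hMdef⟩ : ∃ M : ℝ, M = (m.factorial : ℝ) / c ^ m := ⟨_, rfl⟩
  have hM : 0 < M := by rw [hMdef]; positivity
  obtain ⟨ν, hν⟩ : ∃ ν : ℝ, ν = (n:ℝ)/2 := ⟨_, rfl⟩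
  obtain ⟨K1, hK1⟩ : ∃ K1 : ℝ, K1 = C * M * 2 ^ m * (2/α) := ⟨_, rfl⟩
  obtain ⟨K2, hK2⟩ : ∃ K2 : ℝ, K2 = C * (2/((n:ℝ) - α + 2)) := ⟨_, rfl⟩
  obtain ⟨K3, hK3⟩ : ∃ K3 : ℝ, K3 = C * M * (1/(α/2 + (n:ℝ)/2 + 2)) := ⟨_, rfl⟩
  obtain ⟨K4, hK4⟩ : ∃ K4 : ℝ, K4 = C * (2/α) := ⟨_, rfl⟩
  obtain ⟨K5, hK5⟩ : ∃ K5 : ℝ, K5 = 2*C * (2/((n:ℝ) - α)) := ⟨_, rfl⟩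
  have hK1p : 0 < K1 := by rw [hK1]; positivity
  have hK2p : 0 < K2 := by rw [hK2]; positivity
  have hK3p : 0 < K3 := by rw [hK3]; positivity
  have hK4p : 0 < K4 := by rw [hK4]; positivity
  have hK5p : 0 < K5 := by rw [hK5]; positivity
  refine ⟨K1+K2+K3+K4+K5, by positivity, ?_⟩
  intro p p' hderiv h1 h2 t ht x y hxy
  have hr0 : 0 < ‖x - y‖ := by
    rw [norm_pos_iff]; exact sub_ne_zero.mpr hxy
  obtain ⟨r, hrdef⟩ : ∃ r : ℝ, r = ‖x - y‖ := ⟨_, rfl⟩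
  have hr : 0 < r := hrdef ▸ hr0
  rw [← hrdef]
  obtain ⟨R, hRdef⟩ : ∃ R : ℝ, R = r ^ 2 := ⟨_, rfl⟩
  have hR : 0 < R := by rw [hRdef]; positivity
  -- rpow conversions
  have hRr : ∀ β : ℝ, R ^ β = r ^ (2*β) := by
    intro β
    rw [hRdef, ← Real.rpow_natCast r 2, ← Real.rpow_mul hr.le]
    norm_num
  -- kernel bounds with clean exponents
  have hp1 : ∀ u : ℝ, 0 < u → |p u x y| ≤ C * u ^ (-ν) * Real.exp (-(c * R / u)) := by
    intro u hu
    have h := h1 u hu x y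
    have e1 : -c * ‖x - y‖ ^ 2 / u = -(c * R / u) := by rw [hRdef, hrdef]; ring
    have e2 : -(n:ℝ)/2 = -ν := by rw [hν]; ring
    rwa [e1, e2] at h
  have hp2 : ∀ u : ℝ, 0 < u → |p' u x y| ≤ C * u ^ (-ν - 1) * Real.exp (-(c * R / u)) := by
    intro u hu
    have h := h2 u hu x y
    have e1 : -c * ‖x - y‖ ^ 2 / u = -(c * R / u) := by rw [hRdef, hrdef]; ring
    have e2 : -(n:ℝ)/2 = -ν := by rw [hν]; ring
    rw [e1, e2] at h
    have habs : |p' u x y| = |u * p' u x y| / u := by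
      rw [abs_mul, abs_of_pos hu]; field_simp
    rw [habs]
    calc |u * p' u x y| / u ≤ (C * u ^ (-ν) * Real.exp (-(c * R / u))) / u := by gcongr
      _ = C * u ^ (-ν - 1) * Real.exp (-(c * R / u)) := by
          rw [Real.rpow_sub hu, Real.rpow_one]; ring
  have hexp : ∀ u : ℝ, 0 < u → Real.exp (-(c * R / u)) ≤ M * u ^ ((m:ℝ)) / R ^ ((m:ℝ)) := by
    intro u hu
    have h0 : 0 < c * R / u := by positivity
    refine (aux_exp m h0).trans (le_of_eq ?_)
    rw [Real.rpow_natCast, Real.rpow_natCast, div_pow, mul_pow, hMdef]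
    rw [div_div_eq_mul_div]
    have h1' : c ^ m ≠ 0 := by positivity
    have h2' : R ^ m ≠ 0 := by positivity
    field_simp
  have hexple1 : ∀ u : ℝ, 0 < u → Real.exp (-(c * R / u)) ≤ 1 := by
    intro u hu
    rw [Real.exp_le_one_iff]
    have : 0 < c * R / u := by positivity
    linarith
  -- mean value theorem
  have hmvt : ∀ s : ℝ, 0 < s → ∃ ξ, s < ξ ∧ ξ < s + t ∧
      |p s x y - p (s + t) x y| = t * |p' ξ x y| := by
    intro s hs
    have hst : s < s + t := by linarith
    have hcont : ContinuousOn (fun u => p u x y) (Set.Icc s (s + t)) := by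
      intro u hu
      exact ((hderiv u (lt_of_lt_of_le hs hu.1) x y).continuousAt).continuousWithinAt
    obtain ⟨ξ, hξ, heq⟩ := exists_hasDerivAt_eq_slope (fun u => p u x y)
      (fun u => p' u x y) hst hcont (fun u hu => hderiv u (hs.trans hu.1) x y)
    refine ⟨ξ, hξ.1, hξ.2, ?_⟩
    have h3 : p (s + t) x y - p s x y = t * p' ξ x y := by
      rw [heq, add_sub_cancel_left]; field_simp
    rw [abs_sub_comm, h3, abs_mul, abs_of_pos ht]
  -- exponent positivity facts
  have hmν : (0:ℝ) ≤ (m:ℝ) - ν - 1 := by rw [hmr, hν]; linarith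
  have hν0 : (0:ℝ) ≤ ν := by rw [hν]; linarith
  -- splitting the integral
  have hsplit : (∫⁻ s in Set.Ioi (0:ℝ),
        ENNReal.ofReal (s ^ (α / 2 - 1) * |p s x y - p (s + t) x y|))
      = (∫⁻ s in Set.Ioc (0:ℝ) R,
          ENNReal.ofReal (s ^ (α / 2 - 1) * |p s x y - p (s + t) x y|))
        + (∫⁻ s in Set.Ioi R,
          ENNReal.ofReal (s ^ (α / 2 - 1) * |p s x y - p (s + t) x y|)) := by
    rw [← Set.Ioc_union_Ioi_eq_Ioi hR.le,
      lintegral_union measurableSet_Ioi Set.Ioc_disjoint_Ioi_same]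
  -- the target quantity
  have hrQ : 0 ≤ r ^ (α - (n:ℝ) - 2) := Real.rpow_nonneg hr.le _
  have hconc : ∀ Ka Kb : ℝ, 0 ≤ Ka → 0 ≤ Kb → Ka + Kb ≤ K1+K2+K3+K4+K5 →
      (∫⁻ s in Set.Ioc (0:ℝ) R,
          ENNReal.ofReal (s ^ (α / 2 - 1) * |p s x y - p (s + t) x y|))
        ≤ ENNReal.ofReal (Ka * t * r ^ (α - (n:ℝ) - 2)) →
      (∫⁻ s in Set.Ioi R,
          ENNReal.ofReal (s ^ (α / 2 - 1) * |p s x y - p (s + t) x y|))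
        ≤ ENNReal.ofReal (Kb * t * r ^ (α - (n:ℝ) - 2)) →
      (∫⁻ s in Set.Ioi (0:ℝ),
          ENNReal.ofReal (s ^ (α / 2 - 1) * |p s x y - p (s + t) x y|))
        ≤ ENNReal.ofReal ((K1+K2+K3+K4+K5) * t * r ^ (α - ↑n - 2)) := by
    intro Ka Kb hKa hKb hsum hA hB
    rw [hsplit]
    calc _ ≤ ENNReal.ofReal (Ka * t * r ^ (α - (n:ℝ) - 2))
          + ENNReal.ofReal (Kb * t * r ^ (α - (n:ℝ) - 2)) := add_le_add hA hB
      _ = ENNReal.ofReal (Ka * t * r ^ (α - (n:ℝ) - 2)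
          + Kb * t * r ^ (α - (n:ℝ) - 2)) := by
          rw [ENNReal.ofReal_add (by positivity) (by positivity)]
      _ ≤ ENNReal.ofReal ((K1+K2+K3+K4+K5) * t * r ^ (α - ↑n - 2)) := by
          apply ENNReal.ofReal_le_ofReal
          have h0 : 0 ≤ t * r ^ (α - (n:ℝ) - 2) := by positivity
          nlinarith [mul_le_mul_of_nonneg_right hsum h0]
  rcases le_total t R with htR | hRt
  · -- Case t ≤ R
    refine hconc (K1) (K2) hK1p.le hK2p.le (by nlinarith) ?_ ?_
    · -- piece on Ioc 0 R
      have hKK : (0:ℝ) ≤ C * M * 2 ^ m * t * R ^ (-ν - 1) := by positivity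
      calc (∫⁻ s in Set.Ioc (0:ℝ) R,
            ENNReal.ofReal (s ^ (α / 2 - 1) * |p s x y - p (s + t) x y|))
          ≤ ∫⁻ s in Set.Ioc (0:ℝ) R,
            ENNReal.ofReal ((C * M * 2 ^ m * t * R ^ (-ν - 1)) * s ^ (α/2 - 1)) := by
            refine setLIntegral_mono' measurableSet_Ioc fun s hs =>
              ENNReal.ofReal_le_ofReal ?_
            obtain ⟨ξ, hξ1, hξ2, hdiff⟩ := hmvt s hs.1
            have hξ0 : 0 < ξ := hs.1.trans hξ1
            have hξ2R : ξ ≤ 2 * R := by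
              have := hs.2; linarith
            have hkey : |p s x y - p (s + t) x y|
                ≤ C * M * 2 ^ m * t * R ^ (-ν - 1) := by
              rw [hdiff]
              have eR : R ^ (-(m:ℝ)) * R ^ ((m:ℝ) - ν - 1) = R ^ (-ν - 1) := by
                rw [← Real.rpow_add hR]; congr 1; ring
              calc t * |p' ξ x y|
                  ≤ t * (C * ξ ^ (-ν - 1) * (M * ξ ^ ((m:ℝ)) / R ^ ((m:ℝ)))) := by
                    refine mul_le_mul_of_nonneg_left ((hp2 ξ hξ0).trans ?_) ht.le
                    exact mul_le_mul_of_nonneg_left (hexp ξ hξ0) (by positivity)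
                _ = t * (C * M * R ^ (-(m:ℝ)) * ξ ^ ((m:ℝ) - ν - 1)) := by
                    rw [Real.rpow_neg hR.le,
                      show (m:ℝ) - ν - 1 = (-ν - 1) + (m:ℝ) by ring,
                      Real.rpow_add hξ0]
                    field_simp
                _ ≤ t * (C * M * R ^ (-(m:ℝ)) * (2*R) ^ ((m:ℝ) - ν - 1)) := by
                    refine mul_le_mul_of_nonneg_left
                      (mul_le_mul_of_nonneg_left ?_ (by positivity)) ht.le
                    exact Real.rpow_le_rpow hξ0.le hξ2R hmν
                _ = t * (C * M * (2 ^ ((m:ℝ) - ν - 1)) *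
                      (R ^ (-(m:ℝ)) * R ^ ((m:ℝ) - ν - 1))) := by
                    rw [Real.mul_rpow (by norm_num : (0:ℝ) ≤ 2) hR.le]; ring
                _ ≤ t * (C * M * (2 ^ ((m:ℝ))) *
                      (R ^ (-(m:ℝ)) * R ^ ((m:ℝ) - ν - 1))) := by
                    refine mul_le_mul_of_nonneg_left
                      (mul_le_mul_of_nonneg_right
                        (mul_le_mul_of_nonneg_left ?_ (by positivity))
                        (by positivity)) ht.le
                    exact Real.rpow_le_rpow_of_exponent_le one_le_two (by linarith)
                _ = C * M * 2 ^ m * t * R ^ (-ν - 1) := by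
                    rw [eR, Real.rpow_natCast]; ring
            calc s ^ (α/2 - 1) * |p s x y - p (s + t) x y|
                ≤ s ^ (α/2 - 1) * (C * M * 2 ^ m * t * R ^ (-ν - 1)) :=
                  mul_le_mul_of_nonneg_left hkey (Real.rpow_nonneg hs.1.le _)
              _ = (C * M * 2 ^ m * t * R ^ (-ν - 1)) * s ^ (α/2 - 1) := by ring
        _ = ENNReal.ofReal ((C * M * 2 ^ m * t * R ^ (-ν - 1)) *
              (R ^ (α/2 - 1 + 1) / (α/2 - 1 + 1))) :=
            aux_lint_Ioc _ _ _ hKK (by linarith) hR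
        _ = ENNReal.ofReal (K1 * t * r ^ (α - (n:ℝ) - 2)) := by
            congr 1
            have e : R ^ (-ν - 1) * R ^ (α/2 - 1 + 1) = r ^ (α - (n:ℝ) - 2) := by
              rw [← Real.rpow_add hR, hRr]; congr 1; rw [hν]; ring
            calc (C * M * 2 ^ m * t * R ^ (-ν - 1)) * (R ^ (α/2 - 1 + 1) / (α/2 - 1 + 1))
                = (C * M * 2 ^ m * (2/α)) * t * (R ^ (-ν - 1) * R ^ (α/2 - 1 + 1)) := by
                  field_simp
                  ring
                  exact mul_inv_cancel₀ hα0.ne'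
              _ = K1 * t * r ^ (α - (n:ℝ) - 2) := by rw [e, hK1]
    · -- piece on Ioi R
      have hβ2 : α/2 - ν - 2 < -1 := by rw [hν]; linarith
      calc (∫⁻ s in Set.Ioi R,
            ENNReal.ofReal (s ^ (α / 2 - 1) * |p s x y - p (s + t) x y|))
          ≤ ∫⁻ s in Set.Ioi R, ENNReal.ofReal ((C*t) * s ^ (α/2 - ν - 2)) := by
            refine setLIntegral_mono' measurableSet_Ioi fun s hs =>
              ENNReal.ofReal_le_ofReal ?_
            have hs0 : 0 < s := hR.trans hs
            obtain ⟨ξ, hξ1, hξ2, hdiff⟩ := hmvt s hs0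
            have hξ0 : 0 < ξ := hs0.trans hξ1
            have hkey : |p s x y - p (s + t) x y| ≤ (C*t) * s ^ (-ν - 1) := by
              rw [hdiff]
              calc t * |p' ξ x y|
                  ≤ t * (C * ξ ^ (-ν - 1) * Real.exp (-(c * R / ξ))) :=
                    mul_le_mul_of_nonneg_left (hp2 ξ hξ0) ht.le
                _ ≤ t * (C * s ^ (-ν - 1) * 1) := by
                    refine mul_le_mul_of_nonneg_left
                      (mul_le_mul (mul_le_mul_of_nonneg_left ?_ hC.le)
                        (hexple1 ξ hξ0) (Real.exp_pos _).le (by positivity)) ht.le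
                    exact Real.rpow_le_rpow_of_nonpos hs0 hξ1.le (by linarith)
                _ = (C*t) * s ^ (-ν - 1) := by ring
            calc s ^ (α/2 - 1) * |p s x y - p (s + t) x y|
                ≤ s ^ (α/2 - 1) * ((C*t) * s ^ (-ν - 1)) :=
                  mul_le_mul_of_nonneg_left hkey (Real.rpow_nonneg hs0.le _)
              _ = (C*t) * s ^ (α/2 - ν - 2) := by
                  rw [show α/2 - ν - 2 = (α/2 - 1) + (-ν - 1) by ring,
                    Real.rpow_add hs0]
                  ring
        _ = ENNReal.ofReal ((C*t) * (R ^ ((α/2 - ν - 2) + 1) / (-((α/2 - ν - 2) + 1)))) :=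
            aux_lint_Ioi _ _ _ (by positivity) hβ2 hR
        _ = ENNReal.ofReal (K2 * t * r ^ (α - (n:ℝ) - 2)) := by
            congr 1
            have e : R ^ ((α/2 - ν - 2) + 1) = r ^ (α - (n:ℝ) - 2) := by
              rw [hRr]; congr 1; rw [hν]; ring
            have hd : -((α/2 - ν - 2) + 1) = ((n:ℝ) - α + 2)/2 := by rw [hν]; ring
            have hne : ((n:ℝ) - α + 2) ≠ 0 := by linarith
            rw [e, hd, hK2]
            field_simp
  · -- Case R ≤ t
    have hrt : r ^ (α - (n:ℝ)) ≤ t * r ^ (α - (n:ℝ) - 2) := by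
      have e : r ^ (α - (n:ℝ)) = R * r ^ (α - (n:ℝ) - 2) := by
        rw [hRdef, ← Real.rpow_natCast r 2, ← Real.rpow_add hr]
        congr 1
        push_cast; ring
      rw [e]
      exact mul_le_mul_of_nonneg_right hRt (Real.rpow_nonneg hr.le _)
    refine hconc (K3+K4) K5 (by positivity) hK5p.le (by nlinarith) ?_ ?_
    · -- Ioc piece
      have hβ3 : (-1:ℝ) < α/2 - 1 + ((m:ℝ) - ν) := by rw [hmr, hν]; linarith
      calc (∫⁻ s in Set.Ioc (0:ℝ) R,
            ENNReal.ofReal (s ^ (α / 2 - 1) * |p s x y - p (s + t) x y|))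
          ≤ ∫⁻ s in Set.Ioc (0:ℝ) R,
              (ENNReal.ofReal ((C * M * R ^ (-(m:ℝ))) * s ^ (α/2 - 1 + ((m:ℝ) - ν)))
              + ENNReal.ofReal ((C * R ^ (-ν)) * s ^ (α/2 - 1))) := by
            refine setLIntegral_mono' measurableSet_Ioc fun s hs => ?_
            have hs0 : 0 < s := hs.1
            have hb1 : |p s x y| ≤ (C * M * R ^ (-(m:ℝ))) * s ^ ((m:ℝ) - ν) := by
              calc |p s x y| ≤ C * s ^ (-ν) * Real.exp (-(c * R / s)) := hp1 s hs0
                _ ≤ C * s ^ (-ν) * (M * s ^ ((m:ℝ)) / R ^ ((m:ℝ))) :=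
                    mul_le_mul_of_nonneg_left (hexp s hs0) (by positivity)
                _ = (C * M * R ^ (-(m:ℝ))) * s ^ ((m:ℝ) - ν) := by
                    rw [Real.rpow_neg hR.le,
                      show (m:ℝ) - ν = (-ν) + (m:ℝ) by ring, Real.rpow_add hs0]
                    field_simp
            have hst0 : 0 < s + t := by linarith
            have hb2 : |p (s + t) x y| ≤ C * R ^ (-ν) := by
              calc |p (s+t) x y| ≤ C * (s+t) ^ (-ν) * Real.exp (-(c * R / (s+t))) :=
                    hp1 _ hst0
                _ ≤ C * (s+t) ^ (-ν) * 1 :=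
                    mul_le_mul_of_nonneg_left (hexple1 _ hst0) (by positivity)
                _ = C * (s+t) ^ (-ν) := by ring
                _ ≤ C * t ^ (-ν) := by
                    refine mul_le_mul_of_nonneg_left ?_ hC.le
                    exact Real.rpow_le_rpow_of_nonpos ht (by linarith) (by linarith)
                _ ≤ C * R ^ (-ν) := by
                    refine mul_le_mul_of_nonneg_left ?_ hC.le
                    exact Real.rpow_le_rpow_of_nonpos hR hRt (by linarith)
            have hmain : s ^ (α/2 - 1) * |p s x y - p (s + t) x y|
                ≤ (C * M * R ^ (-(m:ℝ))) * s ^ (α/2 - 1 + ((m:ℝ) - ν))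
                  + (C * R ^ (-ν)) * s ^ (α/2 - 1) := by
              calc s ^ (α/2 - 1) * |p s x y - p (s + t) x y|
                  ≤ s ^ (α/2 - 1) * ((C * M * R ^ (-(m:ℝ))) * s ^ ((m:ℝ) - ν)
                      + C * R ^ (-ν)) :=
                    mul_le_mul_of_nonneg_left
                      ((abs_sub _ _).trans (add_le_add hb1 hb2))
                      (Real.rpow_nonneg hs0.le _)
                _ = (C * M * R ^ (-(m:ℝ))) * s ^ (α/2 - 1 + ((m:ℝ) - ν))
                    + (C * R ^ (-ν)) * s ^ (α/2 - 1) := by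
                    rw [Real.rpow_add hs0]
                    ring
            refine le_trans (ENNReal.ofReal_le_ofReal hmain) ?_
            rw [ENNReal.ofReal_add (by positivity) (by positivity)]
        _ = (∫⁻ s in Set.Ioc (0:ℝ) R,
              ENNReal.ofReal ((C * M * R ^ (-(m:ℝ))) * s ^ (α/2 - 1 + ((m:ℝ) - ν))))
            + ∫⁻ s in Set.Ioc (0:ℝ) R,
              ENNReal.ofReal ((C * R ^ (-ν)) * s ^ (α/2 - 1)) :=
            lintegral_add_left (aux_meas _ _) _
        _ = ENNReal.ofReal ((C * M * R ^ (-(m:ℝ))) *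
              (R ^ ((α/2 - 1 + ((m:ℝ) - ν)) + 1) / ((α/2 - 1 + ((m:ℝ) - ν)) + 1)))
            + ENNReal.ofReal ((C * R ^ (-ν)) * (R ^ (α/2 - 1 + 1) / (α/2 - 1 + 1))) := by
            rw [aux_lint_Ioc _ _ _ (by positivity) hβ3 hR,
              aux_lint_Ioc _ _ _ (by positivity) (by linarith) hR]
        _ ≤ ENNReal.ofReal (K3 * t * r ^ (α - (n:ℝ) - 2))
            + ENNReal.ofReal (K4 * t * r ^ (α - (n:ℝ) - 2)) := by
            refine add_le_add (ENNReal.ofReal_le_ofReal ?_) (ENNReal.ofReal_le_ofReal ?_)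
            · have e3 : R ^ (-(m:ℝ)) * R ^ ((α/2 - 1 + ((m:ℝ) - ν)) + 1)
                  = r ^ (α - (n:ℝ)) := by
                rw [← Real.rpow_add hR, hRr]; congr 1; rw [hν]; ring
              have ed3 : (α/2 - 1 + ((m:ℝ) - ν)) + 1 = α/2 + (n:ℝ)/2 + 2 := by
                rw [hmr, hν]; ring
              calc (C * M * R ^ (-(m:ℝ))) *
                    (R ^ ((α/2 - 1 + ((m:ℝ) - ν)) + 1) / ((α/2 - 1 + ((m:ℝ) - ν)) + 1))
                  = (C * M * (1/((α/2 - 1 + ((m:ℝ) - ν)) + 1))) *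
                    (R ^ (-(m:ℝ)) * R ^ ((α/2 - 1 + ((m:ℝ) - ν)) + 1)) := by ring
                _ = K3 * r ^ (α - (n:ℝ)) := by rw [e3, ed3, ← hK3]
                _ ≤ K3 * (t * r ^ (α - (n:ℝ) - 2)) := mul_le_mul_of_nonneg_left hrt hK3p.le
                _ = K3 * t * r ^ (α - (n:ℝ) - 2) := by ring
            · have e4 : R ^ (-ν) * R ^ (α/2 - 1 + 1) = r ^ (α - (n:ℝ)) := by
                rw [← Real.rpow_add hR, hRr]; congr 1; rw [hν]; ring
              have ed4 : (1:ℝ)/(α/2 - 1 + 1) = 2/α := by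
                rw [show α/2 - 1 + 1 = α/2 by ring, one_div_div]
              calc (C * R ^ (-ν)) * (R ^ (α/2 - 1 + 1) / (α/2 - 1 + 1))
                  = (C * (1/(α/2 - 1 + 1))) * (R ^ (-ν) * R ^ (α/2 - 1 + 1)) := by ring
                _ = K4 * r ^ (α - (n:ℝ)) := by rw [e4, ed4, ← hK4]
                _ ≤ K4 * (t * r ^ (α - (n:ℝ) - 2)) := mul_le_mul_of_nonneg_left hrt hK4p.le
                _ = K4 * t * r ^ (α - (n:ℝ) - 2) := by ring
        _ = ENNReal.ofReal ((K3+K4) * t * r ^ (α - (n:ℝ) - 2)) := by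
            rw [← ENNReal.ofReal_add (by positivity) (by positivity)]
            congr 1
            ring
    · -- Ioi piece
      have hβ5 : α/2 - 1 - ν < -1 := by rw [hν]; linarith
      calc (∫⁻ s in Set.Ioi R,
            ENNReal.ofReal (s ^ (α / 2 - 1) * |p s x y - p (s + t) x y|))
          ≤ ∫⁻ s in Set.Ioi R, ENNReal.ofReal ((2*C) * s ^ (α/2 - 1 - ν)) := by
            refine setLIntegral_mono' measurableSet_Ioi fun s hs =>
              ENNReal.ofReal_le_ofReal ?_
            have hs0 : 0 < s := hR.trans hs
            have hst0 : 0 < s + t := by linarith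
            have hb1 : |p s x y| ≤ C * s ^ (-ν) := by
              calc |p s x y| ≤ C * s ^ (-ν) * Real.exp (-(c*R/s)) := hp1 s hs0
                _ ≤ C * s ^ (-ν) * 1 :=
                    mul_le_mul_of_nonneg_left (hexple1 s hs0) (by positivity)
                _ = C * s ^ (-ν) := by ring
            have hb2 : |p (s+t) x y| ≤ C * s ^ (-ν) := by
              calc |p (s+t) x y| ≤ C * (s+t) ^ (-ν) * Real.exp (-(c*R/(s+t))) :=
                    hp1 _ hst0
                _ ≤ C * (s+t) ^ (-ν) * 1 :=
                    mul_le_mul_of_nonneg_left (hexple1 _ hst0) (by positivity)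
                _ = C * (s+t) ^ (-ν) := by ring
                _ ≤ C * s ^ (-ν) := mul_le_mul_of_nonneg_left
                    (Real.rpow_le_rpow_of_nonpos hs0 (by linarith) (by linarith)) hC.le
            calc s ^ (α/2 - 1) * |p s x y - p (s+t) x y|
                ≤ s ^ (α/2 - 1) * (C * s ^ (-ν) + C * s ^ (-ν)) :=
                  mul_le_mul_of_nonneg_left ((abs_sub _ _).trans (add_le_add hb1 hb2))
                    (Real.rpow_nonneg hs0.le _)
              _ = (2*C) * s ^ (α/2 - 1 - ν) := by
                  rw [show α/2 - 1 - ν = (α/2 - 1) + (-ν) by ring, Real.rpow_add hs0]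
                  ring
        _ = ENNReal.ofReal ((2*C) * (R ^ ((α/2 - 1 - ν) + 1) / (-((α/2 - 1 - ν) + 1)))) :=
            aux_lint_Ioi _ _ _ (by positivity) hβ5 hR
        _ ≤ ENNReal.ofReal (K5 * t * r ^ (α - (n:ℝ) - 2)) := by
            apply ENNReal.ofReal_le_ofReal
            have e5 : R ^ ((α/2 - 1 - ν) + 1) = r ^ (α - (n:ℝ)) := by
              rw [hRr]; congr 1; rw [hν]; ring
            have ed5 : -((α/2 - 1 - ν) + 1) = ((n:ℝ) - α)/2 := by rw [hν]; ring
            have hne : ((n:ℝ) - α) ≠ 0 := ne_of_gt hnα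
            calc (2*C) * (R ^ ((α/2 - 1 - ν) + 1) / (-((α/2 - 1 - ν) + 1)))
                = (2*C) * (r ^ (α - (n:ℝ)) / (((n:ℝ) - α)/2)) := by rw [e5, ed5]
              _ = K5 * r ^ (α - (n:ℝ)) := by rw [hK5]; field_simp
              _ ≤ K5 * (t * r ^ (α - (n:ℝ) - 2)) := mul_le_mul_of_nonneg_left hrt hK5p.le
              _ = K5 * t * r ^ (α - (n:ℝ) - 2) := by ring
end

section
/- For every α with 0 < α < 1 and every x with 0 < x < 1/2: ∫_x^{1/2} (y − x)^{α − 1} · ( −1/(y^α log y) ) dy ≥ log( log(1/x) ) − log( log 2 ). -/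
open MeasureTheory ENNReal Real Set

/-- lower bound for the fractional integral of
`f(y) = -1/(y^α log y)` on `(x, 1/2]`. -/
theorem stmt16 (α x : ℝ) (hα0 : 0 < α) (hα1 : α < 1) (hx0 : 0 < x) (hx : x < 1 / 2) :
    Real.log (Real.log (1 / x)) - Real.log (Real.log 2) ≤
      ∫ y in Set.Ioc x (1 / 2), (y - x) ^ (α - 1) * (-1 / (y ^ α * Real.log y)) := by
  have hxle : x ≤ 1 / 2 := hx.le
  set f : ℝ → ℝ := fun y => (y - x) ^ (α - 1) * (-1 / (y ^ α * Real.log y)) with hf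
  set g : ℝ → ℝ := fun y => -1 / (y * Real.log y) with hg
  have hyprop : ∀ y ∈ Icc x (1 / 2), 0 < y ∧ Real.log y < 0 := by
    intro y hy
    have hy0 : 0 < y := lt_of_lt_of_le hx0 hy.1
    have hy1 : y < 1 := lt_of_le_of_lt hy.2 (by norm_num)
    exact ⟨hy0, Real.log_neg hy0 hy1⟩
  -- continuity of g on Icc
  have hgcont : ContinuousOn g (Icc x (1 / 2)) := by
    apply ContinuousOn.div continuousOn_const
    · exact continuousOn_id.mul (Real.continuousOn_log.mono (fun y hy => (hyprop y hy).1.ne'))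
    · intro y hy
      exact mul_ne_zero (hyprop y hy).1.ne' (hyprop y hy).2.ne
  have hg_int : IntegrableOn g (Ioc x (1 / 2)) :=
    (hgcont.integrableOn_Icc).mono_set Ioc_subset_Icc_self
  -- integrability of f
  have hrpow_int : IntegrableOn (fun y => (y - x) ^ (α - 1)) (Ioc x (1 / 2)) := by
    have h1 : IntervalIntegrable (fun y : ℝ => y ^ (α - 1)) volume 0 (1 / 2 - x) :=
      intervalIntegral.intervalIntegrable_rpow' (by linarith)
    have h2 := h1.comp_sub_right x
    simp only [zero_add, sub_add_cancel] at h2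
    exact (intervalIntegrable_iff_integrableOn_Ioc_of_le hxle).mp h2
  have hfcont : ContinuousOn f (Ioc x (1 / 2)) := by
    apply ContinuousOn.mul
    · exact (continuousOn_id.sub continuousOn_const).rpow_const
        (fun y hy => Or.inl (by simpa using sub_ne_zero.mpr (ne_of_gt hy.1)))
    · apply ContinuousOn.div continuousOn_const
      · exact ((continuousOn_id.rpow_const (fun y hy =>
            Or.inl (hyprop y (Ioc_subset_Icc_self hy)).1.ne')).mul
          (Real.continuousOn_log.mono (fun y hy => (hyprop y (Ioc_subset_Icc_self hy)).1.ne')))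
      · intro y hy
        have h := hyprop y (Ioc_subset_Icc_self hy)
        exact mul_ne_zero (Real.rpow_pos_of_pos h.1 α).ne' h.2.ne
  have hf_nonneg : ∀ y ∈ Ioc x (1 / 2), 0 ≤ f y := by
    intro y hy
    have h := hyprop y (Ioc_subset_Icc_self hy)
    have h1 : (0:ℝ) < y - x := sub_pos.mpr hy.1
    have h2 : 0 < y ^ α * (-Real.log y) :=
      mul_pos (Real.rpow_pos_of_pos h.1 α) (neg_pos.mpr h.2)
    have : (0:ℝ) ≤ -1 / (y ^ α * Real.log y) := by
      rw [div_nonneg_iff]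
      right
      constructor
      · norm_num
      · nlinarith [Real.rpow_pos_of_pos h.1 α]
    exact mul_nonneg (Real.rpow_pos_of_pos h1 (α - 1)).le this
  have hbound : ∀ y ∈ Ioc x (1 / 2), f y ≤ (1 / (x ^ α * Real.log 2)) * (y - x) ^ (α - 1) := by
    intro y hy
    have h := hyprop y (Ioc_subset_Icc_self hy)
    have hlog2 : (0:ℝ) < Real.log 2 := Real.log_pos (by norm_num)
    have hyα : x ^ α ≤ y ^ α := Real.rpow_le_rpow hx0.le hy.1.le hα0.le
    have hlogy : Real.log 2 ≤ -Real.log y := by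
      have : Real.log y ≤ Real.log (1/2) := Real.log_le_log h.1 hy.2
      rw [Real.log_div one_ne_zero (two_ne_zero), Real.log_one] at this
      linarith
    have hxα : (0:ℝ) < x ^ α := Real.rpow_pos_of_pos hx0 α
    have hy' : 0 < y ^ α := Real.rpow_pos_of_pos h.1 α
    have hA : x ^ α * Real.log 2 ≤ y ^ α * -Real.log y :=
      mul_le_mul hyα hlogy hlog2.le hy'.le
    have key : -1 / (y ^ α * Real.log y) ≤ 1 / (x ^ α * Real.log 2) := by
      have e : -1 / (y ^ α * Real.log y) = 1 / (y ^ α * -Real.log y) := by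
        rw [mul_neg, div_neg, neg_div]
      rw [e]
      exact one_div_le_one_div_of_le (by positivity) hA
    calc f y ≤ (y - x) ^ (α - 1) * (1 / (x ^ α * Real.log 2)) := by
              apply mul_le_mul_of_nonneg_left key (Real.rpow_pos_of_pos (sub_pos.mpr hy.1) _).le
      _ = (1 / (x ^ α * Real.log 2)) * (y - x) ^ (α - 1) := mul_comm _ _
  have hf_int : IntegrableOn f (Ioc x (1 / 2)) := by
    apply Integrable.mono (hrpow_int.const_mul (1 / (x ^ α * Real.log 2)))
      (hfcont.aestronglyMeasurable measurableSet_Ioc)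
    rw [ae_restrict_iff' measurableSet_Ioc]
    filter_upwards with y
    intro hy
    rw [Real.norm_eq_abs, Real.norm_eq_abs, abs_of_nonneg (hf_nonneg y hy)]
    have h1 : (0:ℝ) ≤ (1 / (x ^ α * Real.log 2)) * (y - x) ^ (α - 1) := by
      have hlog2 : (0:ℝ) < Real.log 2 := Real.log_pos (by norm_num)
      have := Real.rpow_pos_of_pos (sub_pos.mpr hy.1) (α - 1)
      positivity
    rw [abs_of_nonneg h1]
    exact hbound y hy
  -- pointwise g ≤ f
  have hmono : ∀ y ∈ Ioc x (1 / 2), g y ≤ f y := by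
    intro y hy
    have h := hyprop y (Ioc_subset_Icc_self hy)
    have h1 : (0:ℝ) < y - x := sub_pos.mpr hy.1
    have hrw : g y = y ^ (α - 1) * (-1 / (y ^ α * Real.log y)) := by
      have : y ^ (α - 1) = y ^ α / y := by
        rw [Real.rpow_sub h.1, Real.rpow_one]
      have hyα0 : y ^ α ≠ 0 := (Real.rpow_pos_of_pos h.1 α).ne'
      have hL : Real.log y ≠ 0 := h.2.ne
      have hy0 : y ≠ 0 := h.1.ne'
      rw [hg, this]
      field_simp
    rw [hrw]
    apply mul_le_mul_of_nonneg_right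
    · exact Real.rpow_le_rpow_of_nonpos h1 (by linarith) (by linarith)
    · rw [div_nonneg_iff]
      right
      refine ⟨by norm_num, ?_⟩
      nlinarith [Real.rpow_pos_of_pos h.1 α]
  have hle : ∫ y in Ioc x (1 / 2), g y ≤ ∫ y in Ioc x (1 / 2), f y :=
    setIntegral_mono_on hg_int hf_int measurableSet_Ioc hmono
  -- compute ∫ g via FTC
  have hderiv : ∀ y ∈ Icc x (1 / 2), HasDerivAt (fun t => -Real.log (-Real.log t)) (g y) y := by
    intro y hy
    have h := hyprop y hy
    have h1 : HasDerivAt (fun t : ℝ => -Real.log t) (-y⁻¹) y :=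
      (Real.hasDerivAt_log h.1.ne').neg
    have h2 : HasDerivAt (fun t : ℝ => Real.log (-Real.log t)) ((-Real.log y)⁻¹ * -y⁻¹) y :=
      (Real.hasDerivAt_log (by linarith)).comp y h1
    have h3 : HasDerivAt (fun t => -Real.log (-Real.log t)) (-((-Real.log y)⁻¹ * -y⁻¹)) y := h2.neg
    convert h3 using 1
    rw [hg]
    field_simp
  have hFTC : ∫ y in x..(1 / 2), g y =
      (-Real.log (-Real.log (1 / 2))) - (-Real.log (-Real.log x)) := by
    have := intervalIntegral.integral_eq_sub_of_hasDerivAt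
      (f := fun t => -Real.log (-Real.log t)) (f' := g) (a := x) (b := 1 / 2)
      (fun y hy => hderiv y (by rwa [uIcc_of_le hxle] at hy))
      ((hgcont.mono (by rw [uIcc_of_le hxle])).intervalIntegrable)
    simpa using this
  have hval : ∫ y in Ioc x (1 / 2), g y =
      Real.log (Real.log (1 / x)) - Real.log (Real.log 2) := by
    rw [← intervalIntegral.integral_of_le hxle, hFTC]
    have e1 : -Real.log (1 / 2) = Real.log 2 := by
      rw [Real.log_div one_ne_zero two_ne_zero, Real.log_one]; ring
    have e2 : Real.log (1 / x) = -Real.log x := by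
      rw [Real.log_div one_ne_zero hx0.ne', Real.log_one]; ring
    rw [e1, e2]
    ring
  calc Real.log (Real.log (1 / x)) - Real.log (Real.log 2)
      = ∫ y in Ioc x (1 / 2), g y := hval.symm
    _ ≤ ∫ y in Ioc x (1 / 2), f y := hle
    _ = ∫ y in Set.Ioc x (1 / 2), (y - x) ^ (α - 1) * (-1 / (y ^ α * Real.log y)) := rfl
end

section
/- Let 0 < α < 1 and let w : ℝ → ℝ be defined by w(y) = −1/(|y|^α log|y|) for 0 < |y| ≤ 1/2 and w(y) = 0 otherwise. Define G : ℝ → ℝ by G(x) = 0 for x ≤ 0 and G(x) = ∫_{−1/2}^{1/2} |x − y|^{α − 1} w(y) dy for x > 0. Then G(x) is finite for almost every x, G is locally integrable, and G does not belong to BMO(ℝ): for every M > 0 there is a bounded interval I ⊂ ℝ with (1/|I|)∫_I |G(x) − G_I| dx > M, where G_I = (1/|I|)∫_I G. -/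
open MeasureTheory ENNReal Real Set

namespace Stmt17

lemma integrableOn_abs_rpow {r : ℝ} (hr : -1 < r) (a b : ℝ) :
    IntegrableOn (fun y : ℝ => |y| ^ r) (Icc a b) volume := by
  have key : ∀ L : ℝ, 0 ≤ L → IntegrableOn (fun y : ℝ => |y| ^ r) (Icc 0 L) volume := by
    intro L hL
    have h1 : IntegrableOn (fun y : ℝ => y ^ r) (Ioc 0 L) volume := by
      have h := intervalIntegral.intervalIntegrable_rpow' (a := 0) (b := L) hr
      rwa [intervalIntegrable_iff_integrableOn_Ioc_of_le hL] at h
    rw [integrableOn_Icc_iff_integrableOn_Ioc]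
    exact h1.congr_fun (fun y hy => by rw [abs_of_pos hy.1]) measurableSet_Ioc
  set L := max |a| |b| with hLdef
  have hL : 0 ≤ L := le_trans (abs_nonneg a) (le_max_left _ _)
  have hsub : Icc a b ⊆ Icc (-L) L := by
    intro y hy
    constructor
    · have : -|a| ≤ a := neg_abs_le a
      have : |a| ≤ L := le_max_left _ _
      have := hy.1
      linarith [neg_abs_le a]
    · have := hy.2
      have : b ≤ |b| := le_abs_self b
      linarith [le_max_right |a| |b|]
  refine IntegrableOn.mono_set ?_ hsub
  have hneg : IntegrableOn (fun y : ℝ => |y| ^ r) (Icc (-L) 0) volume := by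
    rw [← (Measure.measurePreserving_neg (volume : Measure ℝ)).integrableOn_comp_preimage
      (Homeomorph.neg ℝ).measurableEmbedding]
    simp only [Function.comp_def, Homeomorph.coe_neg, abs_neg, neg_preimage, neg_Icc,
      neg_neg, neg_zero]
    exact key L hL
  have hun : Icc (-L) L = Icc (-L) 0 ∪ Icc 0 L := (Icc_union_Icc_eq_Icc (by linarith) hL).symm
  rw [hun]
  exact hneg.union (key L hL)

lemma integrableOn_abs_rpow_sub {r : ℝ} (hr : -1 < r) (c a b : ℝ) :
    IntegrableOn (fun y : ℝ => |y - c| ^ r) (Icc a b) volume := by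
  have h := (measurePreserving_add_right (volume : Measure ℝ) (-c)).integrableOn_comp_preimage
      (Homeomorph.addRight (-c)).measurableEmbedding
      (f := fun y : ℝ => |y| ^ r) (s := Icc (a - c) (b - c))
  have h2 := h.2 (integrableOn_abs_rpow hr (a - c) (b - c))
  have hs : ((fun x : ℝ => x + -c) ⁻¹' Icc (a - c) (b - c)) = Icc a b := by
    ext y
    simp only [mem_preimage, mem_Icc]
    constructor <;> intro hy <;> constructor <;> linarith [hy.1, hy.2]
  have hf : ((fun y : ℝ => |y| ^ r) ∘ (fun x : ℝ => x + -c)) = fun y : ℝ => |y - c| ^ r := by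
    funext y
    simp [sub_eq_add_neg]
  rwa [hs, hf] at h2

lemma setIntegral_abs_rpow_sub (r c a b : ℝ) :
    ∫ x in Icc a b, |x - c| ^ r = ∫ t in Icc (a - c) (b - c), |t| ^ r := by
  rw [← integral_indicator measurableSet_Icc, ← integral_indicator measurableSet_Icc,
    ← integral_sub_right_eq_self (fun t => (Icc (a - c) (b - c)).indicator (fun t : ℝ => |t| ^ r) t) c]
  congr 1
  funext x
  by_cases hx : x ∈ Icc a b
  · have hx' : x - c ∈ Icc (a - c) (b - c) := ⟨by linarith [hx.1], by linarith [hx.2]⟩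
    rw [indicator_of_mem hx', indicator_of_mem hx]
  · have hx' : x - c ∉ Icc (a - c) (b - c) := by
      intro h
      exact hx ⟨by linarith [h.1], by linarith [h.2]⟩
    rw [indicator_of_notMem hx', indicator_of_notMem hx]


variable {α : ℝ} {w : ℝ → ℝ}

lemma w_bounds (hα0 : 0 < α)
    (hw : w = fun y => if 0 < |y| ∧ |y| ≤ 1 / 2 then -1 / (|y| ^ α * Real.log |y|) else 0)
    (y : ℝ) : 0 ≤ w y ∧ w y ≤ |y| ^ (-α) / Real.log 2 := by
  subst hw
  dsimp only
  split_ifs with h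
  · obtain ⟨h1, h2⟩ := h
    have hA : (0:ℝ) < |y| ^ α := rpow_pos_of_pos h1 α
    have hlog2 : (0:ℝ) < Real.log 2 := Real.log_pos one_lt_two
    have hL : Real.log |y| ≤ -Real.log 2 := by
      have hle := Real.log_le_log h1 h2
      rwa [show Real.log (1/2 : ℝ) = -Real.log 2 by rw [one_div, Real.log_inv]] at hle
    have hLneg : Real.log |y| < 0 := lt_of_le_of_lt hL (by linarith)
    have hden : |y| ^ α * Real.log |y| < 0 := mul_neg_of_pos_of_neg hA hLneg
    constructor
    · exact le_of_lt (div_pos_of_neg_of_neg (by norm_num) hden)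
    · have key : -1 / (|y| ^ α * Real.log |y|) = 1 / (|y| ^ α * (-Real.log |y|)) := by
        rw [mul_neg, div_neg, ← neg_div]
      rw [key, Real.rpow_neg (abs_nonneg y)]
      calc 1 / (|y| ^ α * (-Real.log |y|)) ≤ 1 / (|y| ^ α * Real.log 2) := by
            apply one_div_le_one_div_of_le (mul_pos hA hlog2)
            nlinarith
        _ = (|y| ^ α)⁻¹ / Real.log 2 := by
            rw [one_div, mul_inv, div_eq_mul_inv]
  · refine ⟨le_refl 0, ?_⟩
    positivity

lemma w_meas
    (hw : w = fun y => if 0 < |y| ∧ |y| ≤ 1 / 2 then -1 / (|y| ^ α * Real.log |y|) else 0) :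
    Measurable w := by
  subst hw
  apply Measurable.ite
  · have h1 : MeasurableSet {y : ℝ | 0 < |y|} :=
      measurableSet_lt measurable_const continuous_abs.measurable
    have h2 : MeasurableSet {y : ℝ | |y| ≤ 1/2} :=
      measurableSet_le continuous_abs.measurable measurable_const
    simpa [setOf_and] using h1.inter h2
  · exact measurable_const.div
      ((continuous_abs.measurable.pow measurable_const).mul
        (Real.measurable_log.comp continuous_abs.measurable))
  · exact measurable_const

lemma w_int (hα0 : 0 < α) (hα1 : α < 1)
    (hw : w = fun y => if 0 < |y| ∧ |y| ≤ 1 / 2 then -1 / (|y| ^ α * Real.log |y|) else 0) :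
    IntegrableOn w (Icc (-(1:ℝ)/2) (1/2)) volume := by
  have hbig : IntegrableOn (fun y : ℝ => |y| ^ (-α) / Real.log 2)
      (Icc (-(1:ℝ)/2) (1/2)) volume :=
    (integrableOn_abs_rpow (by linarith) _ _).div_const _
  apply Integrable.mono hbig ((w_meas hw).aestronglyMeasurable)
  apply ae_of_all
  intro y
  have hb := w_bounds hα0 hw y
  have hlog2 : (0:ℝ) < Real.log 2 := Real.log_pos one_lt_two
  rw [Real.norm_eq_abs, Real.norm_eq_abs, abs_of_nonneg hb.1,
    abs_of_nonneg (by positivity : (0:ℝ) ≤ |y| ^ (-α) / Real.log 2)]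
  exact hb.2

lemma kernel_meas
    (hw : w = fun y => if 0 < |y| ∧ |y| ≤ 1 / 2 then -1 / (|y| ^ α * Real.log |y|) else 0) :
    Measurable (fun p : ℝ × ℝ => |p.1 - p.2| ^ (α - 1) * w p.2) :=
  ((measurable_fst.sub measurable_snd).abs.pow measurable_const).mul ((w_meas hw).comp measurable_snd)

lemma ptwise_int (hα0 : 0 < α) (hα1 : α < 1)
    (hw : w = fun y => if 0 < |y| ∧ |y| ≤ 1 / 2 then -1 / (|y| ^ α * Real.log |y|) else 0)
    {x : ℝ} (hx : x ≠ 0) :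
    IntegrableOn (fun y => |x - y| ^ (α - 1) * w y) (Icc (-(1:ℝ)/2) (1/2)) volume := by
  have hxpos : 0 < |x| := abs_pos.2 hx
  set C : ℝ := max ((|x|/2) ^ (α - 1)) ((|x|/2) ^ (-α)) with hC
  have hC0 : 0 ≤ C := le_trans (rpow_nonneg (by positivity) _) (le_max_left _ _)
  have hlog2 : (0:ℝ) < Real.log 2 := Real.log_pos one_lt_two
  have hint1 : IntegrableOn (fun y : ℝ => |y - x| ^ (α - 1)) (Icc (-(1:ℝ)/2) (1/2)) volume :=
    integrableOn_abs_rpow_sub (by linarith) x _ _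
  have hint2 : IntegrableOn (fun y : ℝ => |y| ^ (-α)) (Icc (-(1:ℝ)/2) (1/2)) volume :=
    integrableOn_abs_rpow (by linarith) _ _
  have hbig : IntegrableOn
      (fun y : ℝ => C / Real.log 2 * (|y - x| ^ (α - 1) + |y| ^ (-α)))
      (Icc (-(1:ℝ)/2) (1/2)) volume := (hint1.add hint2).const_mul _
  apply Integrable.mono hbig
  · exact (((measurable_const.sub measurable_id).abs.pow measurable_const).mul (w_meas hw)).aestronglyMeasurable
  apply ae_of_all
  intro y
  have hwnn := (w_bounds hα0 hw y).1
  have hwle := (w_bounds hα0 hw y).2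
  have hk_nn : (0:ℝ) ≤ |x - y| ^ (α - 1) := rpow_nonneg (abs_nonneg _) _
  have hg_nn : (0:ℝ) ≤ C / Real.log 2 * (|y - x| ^ (α - 1) + |y| ^ (-α)) := by positivity
  rw [Real.norm_eq_abs, Real.norm_eq_abs, abs_of_nonneg (mul_nonneg hk_nn hwnn),
    abs_of_nonneg hg_nn]
  have hcomm : |x - y| = |y - x| := abs_sub_comm x y
  by_cases hcond : w y = 0
  · rw [hcond, mul_zero]; exact hg_nn
  · have hmem : 0 < |y| ∧ |y| ≤ 1/2 := by
      by_contra hmem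
      apply hcond
      rw [hw]
      simp only [if_neg hmem]
    obtain ⟨hy1, hy2⟩ := hmem
    by_cases hy : |y| ≤ |x|/2
    · have h1 : |x|/2 ≤ |x - y| := by
        have habs := abs_sub_abs_le_abs_sub x y
        linarith
      have h2 : |x - y| ^ (α - 1) ≤ (|x|/2) ^ (α - 1) :=
        rpow_le_rpow_of_nonpos (by positivity) h1 (by linarith)
      calc |x - y| ^ (α - 1) * w y ≤ (|x|/2) ^ (α-1) * (|y| ^ (-α) / Real.log 2) :=
            mul_le_mul h2 hwle hwnn (rpow_nonneg (by positivity) _)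
        _ = (|x|/2) ^ (α-1) / Real.log 2 * |y| ^ (-α) := by ring
        _ ≤ C / Real.log 2 * |y| ^ (-α) := by
            apply mul_le_mul_of_nonneg_right _ (rpow_nonneg (abs_nonneg y) _)
            gcongr
            exact le_max_left _ _
        _ ≤ C / Real.log 2 * (|y - x| ^ (α - 1) + |y| ^ (-α)) := by
            apply mul_le_mul_of_nonneg_left _ (by positivity)
            nlinarith [rpow_nonneg (abs_nonneg (y - x)) (α - 1)]
    · push_neg at hy
      have h2 : |y| ^ (-α) ≤ (|x|/2) ^ (-α) :=
        rpow_le_rpow_of_nonpos (by positivity) hy.le (by linarith)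
      have hwle2 : w y ≤ C / Real.log 2 := by
        calc w y ≤ |y| ^ (-α) / Real.log 2 := hwle
          _ ≤ (|x|/2) ^ (-α) / Real.log 2 := by gcongr
          _ ≤ C / Real.log 2 := by gcongr; exact le_max_right _ _
      calc |x - y| ^ (α - 1) * w y ≤ |x - y| ^ (α - 1) * (C / Real.log 2) :=
            mul_le_mul_of_nonneg_left hwle2 hk_nn
        _ = C / Real.log 2 * |y - x| ^ (α - 1) := by rw [hcomm]; ring
        _ ≤ C / Real.log 2 * (|y - x| ^ (α - 1) + |y| ^ (-α)) := by
            apply mul_le_mul_of_nonneg_left _ (by positivity)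
            nlinarith [rpow_nonneg (abs_nonneg y) (-α)]


set_option maxHeartbeats 1000000 in
lemma H_integrableOn (hα0 : 0 < α) (hα1 : α < 1)
    (hw : w = fun y => if 0 < |y| ∧ |y| ≤ 1 / 2 then -1 / (|y| ^ α * Real.log |y|) else 0)
    (a b : ℝ) :
    IntegrableOn (fun x => ∫ y in Icc (-(1:ℝ)/2) (1/2), |x - y| ^ (α - 1) * w y)
      (Icc a b) volume := by
  have hK : IntegrableOn (fun t : ℝ => |t| ^ (α - 1)) (Icc (a - 1) (b + 1)) volume :=
    integrableOn_abs_rpow (by linarith) _ _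
  have hFmeas : AEStronglyMeasurable (fun p : ℝ × ℝ => |p.1 - p.2| ^ (α - 1) * w p.2)
      ((volume.restrict (Icc a b)).prod (volume.restrict (Icc (-(1:ℝ)/2) (1/2)))) :=
    (kernel_meas hw).aestronglyMeasurable
  have hF_int : Integrable (fun p : ℝ × ℝ => |p.1 - p.2| ^ (α - 1) * w p.2)
      ((volume.restrict (Icc a b)).prod (volume.restrict (Icc (-(1:ℝ)/2) (1/2)))) := by
    rw [integrable_prod_iff' hFmeas]
    constructor
    · apply ae_of_all
      intro y
      simpa using (integrableOn_abs_rpow_sub (r := α - 1) (by linarith) y a b).mul_const (w y)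
    · have hwint := w_int hα0 hα1 hw
      apply Integrable.mono (hwint.const_mul (∫ t in Icc (a - 1) (b + 1), |t| ^ (α - 1)))
      · exact (((kernel_meas hw).norm.stronglyMeasurable).integral_prod_left').aestronglyMeasurable
      · filter_upwards [ae_restrict_mem measurableSet_Icc] with y hy
        have hwnn := (w_bounds hα0 hw y).1
        have habs : ∀ x : ℝ, ‖|x - y| ^ (α - 1) * w y‖ = |x - y| ^ (α - 1) * w y := fun x => by
          rw [Real.norm_eq_abs,
            abs_of_nonneg (mul_nonneg (rpow_nonneg (abs_nonneg _) _) hwnn)]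
        have h1 : (∫ x in Icc a b, ‖|x - y| ^ (α - 1) * w y‖) =
            (∫ x in Icc a b, |x - y| ^ (α - 1)) * w y := by
          simp_rw [habs]
          rw [integral_mul_const]
        have h2 : ∫ x in Icc a b, |x - y| ^ (α - 1) ≤
            ∫ t in Icc (a - 1) (b + 1), |t| ^ (α - 1) := by
          rw [setIntegral_abs_rpow_sub]
          apply setIntegral_mono_set hK
            (ae_of_all _ fun t => rpow_nonneg (abs_nonneg t) _)
          exact HasSubset.Subset.eventuallyLE
            (Icc_subset_Icc (by linarith [hy.1, hy.2]) (by linarith [hy.1, hy.2]))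
        have hint_nn : (0:ℝ) ≤ ∫ x in Icc a b, |x - y| ^ (α - 1) :=
          integral_nonneg fun t => rpow_nonneg (abs_nonneg _) _
        show ‖∫ x in Icc a b, ‖|x - y| ^ (α - 1) * w y‖‖ ≤ _
        rw [Real.norm_eq_abs, h1, abs_of_nonneg (mul_nonneg hint_nn hwnn),
          Real.norm_eq_abs]
        calc (∫ x in Icc a b, |x - y| ^ (α - 1)) * w y
            ≤ (∫ t in Icc (a - 1) (b + 1), |t| ^ (α - 1)) * w y :=
              mul_le_mul_of_nonneg_right h2 hwnn
          _ = (∫ t in Icc (a - 1) (b + 1), |t| ^ (α - 1)) * w y := rfl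
          _ ≤ |(∫ t in Icc (a - 1) (b + 1), |t| ^ (α - 1)) * w y| := le_abs_self _
  exact hF_int.integral_prod_left

lemma G_meas {G : ℝ → ℝ}
    (hw : w = fun y => if 0 < |y| ∧ |y| ≤ 1 / 2 then -1 / (|y| ^ α * Real.log |y|) else 0)
    (hG : G = fun x => if x ≤ 0 then 0 else
      ∫ y in Set.Icc (-(1 : ℝ) / 2) (1 / 2), |x - y| ^ (α - 1) * w y) :
    Measurable G := by
  subst hG
  have hH : StronglyMeasurable
      (fun x : ℝ => ∫ y in Icc (-(1:ℝ)/2) (1/2), |x - y| ^ (α - 1) * w y) :=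
    ((kernel_meas hw).stronglyMeasurable).integral_prod_right'
  exact Measurable.ite (measurableSet_le measurable_id measurable_const)
    measurable_const hH.measurable

lemma G_intOn (hα0 : 0 < α) (hα1 : α < 1) {G : ℝ → ℝ}
    (hw : w = fun y => if 0 < |y| ∧ |y| ≤ 1 / 2 then -1 / (|y| ^ α * Real.log |y|) else 0)
    (hG : G = fun x => if x ≤ 0 then 0 else
      ∫ y in Set.Icc (-(1 : ℝ) / 2) (1 / 2), |x - y| ^ (α - 1) * w y)
    (a b : ℝ) : IntegrableOn G (Icc a b) volume := by
  have hH := H_integrableOn hα0 hα1 hw a b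
  apply Integrable.mono hH ((G_meas hw hG).aestronglyMeasurable)
  apply ae_of_all
  intro x
  rw [hG]
  dsimp only
  split_ifs with h
  · simpa using norm_nonneg _
  · exact le_refl _

lemma ftc_loglog {u : ℝ} (hu1 : 0 < u) (hu2 : u ≤ 1/2) :
    ∫ y in Icc u (1/2 : ℝ), -1 / (y * Real.log y) =
      Real.log (-Real.log u) - Real.log (Real.log 2) := by
  rw [integral_Icc_eq_integral_Ioc, ← intervalIntegral.integral_of_le hu2]
  have hderiv : ∀ y ∈ uIcc u (1/2 : ℝ),
      HasDerivAt (fun t : ℝ => -Real.log (-Real.log t)) (-1 / (y * Real.log y)) y := by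
    intro y hy
    rw [uIcc_of_le hu2] at hy
    have hy0 : 0 < y := lt_of_lt_of_le hu1 hy.1
    have hy1 : y < 1 := lt_of_le_of_lt hy.2 (by norm_num)
    have hlogneg : Real.log y < 0 := Real.log_neg hy0 hy1
    have h1 : HasDerivAt (fun t : ℝ => -Real.log t) (-y⁻¹) y :=
      (Real.hasDerivAt_log hy0.ne').neg
    have h2 : HasDerivAt (fun t : ℝ => Real.log (-Real.log t))
        ((-Real.log y)⁻¹ * -y⁻¹) y :=
      by have := (Real.hasDerivAt_log (by linarith : -Real.log y ≠ 0)).comp y h1; exact this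
    have h3 := h2.neg
    have e : -1 / (y * Real.log y) = -((-Real.log y)⁻¹ * -y⁻¹) := by
      rw [inv_neg]; ring
    rw [e]; exact h3
  rw [intervalIntegral.integral_eq_sub_of_hasDerivAt hderiv ?_]
  · rw [show Real.log (1/2:ℝ) = -Real.log 2 by rw [one_div, Real.log_inv], neg_neg]
    ring
  · apply ContinuousOn.intervalIntegrable
    apply ContinuousOn.div continuousOn_const
    · apply ContinuousOn.mul continuousOn_id
      apply Real.continuousOn_log.mono
      intro y hy
      rw [uIcc_of_le hu2] at hy
      have : 0 < y := lt_of_lt_of_le hu1 hy.1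
      simp [this.ne']
    · intro y hy
      rw [uIcc_of_le hu2] at hy
      have hy0 : 0 < y := lt_of_lt_of_le hu1 hy.1
      have hy1 : y < 1 := lt_of_le_of_lt hy.2 (by norm_num)
      exact (mul_neg_of_pos_of_neg hy0 (Real.log_neg hy0 hy1)).ne

end Stmt17

set_option maxHeartbeats 1000000 in
/-- `G = Δ_N^{-α/2} f` (up to a constant factor, extended by `0` to
the negative half-line) is finite a.e. and locally integrable, but is not in
`BMO(ℝ)`. -/
theorem stmt17 (α : ℝ) (hα0 : 0 < α) (hα1 : α < 1)
    (w : ℝ → ℝ)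
    (hw : w = fun y => if 0 < |y| ∧ |y| ≤ 1 / 2 then -1 / (|y| ^ α * Real.log |y|) else 0)
    (G : ℝ → ℝ)
    (hG : G = fun x => if x ≤ 0 then 0 else
      ∫ y in Set.Icc (-(1 : ℝ) / 2) (1 / 2), |x - y| ^ (α - 1) * w y) :
    (∀ᵐ x : ℝ ∂volume,
      IntegrableOn (fun y => |x - y| ^ (α - 1) * w y)
        (Set.Icc (-(1 : ℝ) / 2) (1 / 2)) volume) ∧
    LocallyIntegrable G volume ∧
    (∀ M : ℝ, 0 < M → ∃ a b : ℝ, a < b ∧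
      M < (b - a)⁻¹ * ∫ x in Set.Ioc a b, |G x - ⨍ y in Set.Ioc a b, G y|) := by
  have hlog2 : (0:ℝ) < Real.log 2 := Real.log_pos one_lt_two
  have hwnn : ∀ y, 0 ≤ w y := fun y => (Stmt17.w_bounds hα0 hw y).1
  have hGnn : ∀ x, 0 ≤ G x := by
    intro x
    rw [hG]
    dsimp only
    split_ifs
    · exact le_rfl
    · exact integral_nonneg fun y => mul_nonneg (rpow_nonneg (abs_nonneg _) _) (hwnn y)
  refine ⟨?_, ?_, ?_⟩
  · have h0 : ∀ᵐ x : ℝ ∂volume, x ≠ 0 := by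
      rw [ae_iff]
      have : {x : ℝ | ¬x ≠ 0} = {0} := by ext x; simp
      rw [this]
      exact measure_singleton 0
    filter_upwards [h0] with x hx
    exact Stmt17.ptwise_int hα0 hα1 hw hx
  · intro x
    exact ⟨Icc (x - 1) (x + 1), Icc_mem_nhds (by linarith) (by linarith),
      Stmt17.G_intOn hα0 hα1 hw hG (x - 1) (x + 1)⟩
  · intro M hM
    set ε : ℝ := Real.exp (-(Real.log 2 * Real.exp (4 * M + 1))) / 2 with hεdef
    have hexp1 : (1:ℝ) ≤ Real.exp (4 * M + 1) := Real.one_le_exp (by linarith)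
    have hε0 : 0 < ε := by positivity
    have h2ε : 2 * ε = Real.exp (-(Real.log 2 * Real.exp (4 * M + 1))) := by
      rw [hεdef]; ring
    have h2εle : 2 * ε ≤ 1 / 2 := by
      rw [h2ε]
      have h1 : -(Real.log 2 * Real.exp (4 * M + 1)) ≤ -Real.log 2 := by nlinarith
      calc Real.exp (-(Real.log 2 * Real.exp (4 * M + 1))) ≤ Real.exp (-Real.log 2) :=
            Real.exp_le_exp.2 h1
        _ = 1 / 2 := by
            rw [Real.exp_neg, Real.exp_log (by norm_num : (0:ℝ) < 2)]
            norm_num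
    have hlog2ε : Real.log (2 * ε) = -(Real.log 2 * Real.exp (4 * M + 1)) := by
      rw [h2ε, Real.log_exp]
    have hJval : Real.log (-Real.log (2 * ε)) - Real.log (Real.log 2) = 4 * M + 1 := by
      rw [hlog2ε, neg_neg, Real.log_mul hlog2.ne' (Real.exp_pos _).ne', Real.log_exp]
      ring
    -- pointwise lower bound on (0, ε]
    have hGlb : ∀ x ∈ Ioc (0:ℝ) ε, (4 * M + 1 : ℝ) ≤ G x := by
      intro x hx
      have hx0 : 0 < x := hx.1
      have hxε : x ≤ ε := hx.2
      have hGx : G x = ∫ y in Icc (-(1:ℝ)/2) (1/2), |x - y| ^ (α - 1) * w y := by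
        rw [hG]
        dsimp only
        rw [if_neg (not_le.2 hx0)]
      rw [hGx]
      have hIcc_sub : Icc (2*ε) (1/2:ℝ) ⊆ Icc (-(1:ℝ)/2) (1/2) :=
        Icc_subset_Icc (by linarith) le_rfl
      have hker_int := Stmt17.ptwise_int hα0 hα1 hw hx0.ne'
      have hstep1 : ∫ y in Icc (2*ε) (1/2:ℝ), |x - y| ^ (α - 1) * w y ≤
          ∫ y in Icc (-(1:ℝ)/2) (1/2), |x - y| ^ (α - 1) * w y :=
        setIntegral_mono_set hker_int
          (ae_of_all _ fun y => mul_nonneg (rpow_nonneg (abs_nonneg _) _) (hwnn y))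
          (HasSubset.Subset.eventuallyLE hIcc_sub)
      have hcont : ContinuousOn (fun y : ℝ => -1 / (y * Real.log y)) (Icc (2*ε) (1/2:ℝ)) := by
        apply ContinuousOn.div continuousOn_const
        · apply ContinuousOn.mul continuousOn_id
          apply Real.continuousOn_log.mono
          intro y hy
          have : 0 < y := lt_of_lt_of_le (by linarith) hy.1
          simp [this.ne']
        · intro y hy
          have hy0 : 0 < y := lt_of_lt_of_le (by linarith) hy.1
          have hy1 : y < 1 := lt_of_le_of_lt hy.2 (by norm_num)
          exact (mul_neg_of_pos_of_neg hy0 (Real.log_neg hy0 hy1)).ne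
      have hstep2 : ∫ y in Icc (2*ε) (1/2:ℝ), -1 / (y * Real.log y) ≤
          ∫ y in Icc (2*ε) (1/2:ℝ), |x - y| ^ (α - 1) * w y := by
        apply setIntegral_mono_on (hcont.integrableOn_compact isCompact_Icc)
          (hker_int.mono_set hIcc_sub) measurableSet_Icc
        intro y hy
        have hy1 : 2*ε ≤ y := hy.1
        have hy2 : y ≤ 1/2 := hy.2
        have hy0 : 0 < y := lt_of_lt_of_le (by linarith) hy1
        have hxy : 0 < y - x := by linarith
        have hyx_le : y - x ≤ y := by linarith
        have habs : |x - y| = y - x := by rw [abs_sub_comm]; exact abs_of_pos hxy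
        have hrpow : y ^ (α - 1) ≤ (y - x) ^ (α - 1) :=
          rpow_le_rpow_of_nonpos hxy hyx_le (by linarith)
        have hwy : w y = -1 / (y ^ α * Real.log y) := by
          rw [hw]
          dsimp only
          rw [if_pos ⟨abs_pos.2 hy0.ne', by rwa [abs_of_pos hy0]⟩, abs_of_pos hy0]
        have hlogy : Real.log y < 0 := Real.log_neg hy0 (by linarith)
        have hid : y ^ (α - 1) * w y = -1 / (y * Real.log y) := by
          have e1 : y ^ (α - 1) = y ^ α * y⁻¹ := by
            rw [show α - 1 = α + (-1) by ring, Real.rpow_add hy0, Real.rpow_neg_one]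
          rw [hwy, e1]
          have hA : y ^ α ≠ 0 := (rpow_pos_of_pos hy0 α).ne'
          field_simp
        calc -1 / (y * Real.log y) = y ^ (α - 1) * w y := hid.symm
          _ ≤ (y - x) ^ (α - 1) * w y := mul_le_mul_of_nonneg_right hrpow (hwnn y)
          _ = |x - y| ^ (α - 1) * w y := by rw [habs]
      have hftc := Stmt17.ftc_loglog (u := 2*ε) (by positivity) h2εle
      rw [hftc, hJval] at hstep2
      linarith
    refine ⟨-ε, ε, by linarith, ?_⟩
    set A : ℝ := ⨍ y in Ioc (-ε) ε, G y with hAdef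
    have hGS_int : IntegrableOn G (Ioc (-ε) ε) volume :=
      (Stmt17.G_intOn hα0 hα1 hw hG (-ε) ε).mono_set Ioc_subset_Icc_self
    have hvol : (volume (Ioc (-ε) ε)).toReal = 2 * ε := by
      rw [Real.volume_Ioc, ENNReal.toReal_ofReal (by linarith)]
      ring
    have hAvg : A = (2 * ε)⁻¹ * ∫ x in Ioc (-ε) ε, G x := by
      rw [hAdef, setAverage_eq, measureReal_def, hvol, smul_eq_mul]
    have hIntS_lb : (4 * M + 1) * ε ≤ ∫ x in Ioc (-ε) ε, G x := by
      have hsub2 : Ioc (0:ℝ) ε ⊆ Ioc (-ε) ε := Ioc_subset_Ioc (by linarith) le_rfl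
      have h1 : ∫ x in Ioc (0:ℝ) ε, G x ≤ ∫ x in Ioc (-ε) ε, G x :=
        setIntegral_mono_set hGS_int (ae_of_all _ hGnn)
          (HasSubset.Subset.eventuallyLE hsub2)
      have hconst : ∫ _x in Ioc (0:ℝ) ε, (4 * M + 1 : ℝ) = (4 * M + 1) * ε := by
        rw [setIntegral_const, measureReal_def, Real.volume_Ioc, ENNReal.toReal_ofReal (by linarith),
          smul_eq_mul]
        ring
      have h2 : (4 * M + 1) * ε ≤ ∫ x in Ioc (0:ℝ) ε, G x := by
        rw [← hconst]
        exact setIntegral_mono_on (integrableOn_const measure_Ioc_lt_top.ne)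
          (hGS_int.mono_set hsub2) measurableSet_Ioc hGlb
      linarith
    have hA_lb : (4 * M + 1) / 2 ≤ A := by
      rw [hAvg]
      have : (2 * ε)⁻¹ * ((4 * M + 1) * ε) = (4 * M + 1) / 2 := by
        field_simp
      rw [← this]
      exact mul_le_mul_of_nonneg_left hIntS_lb (by positivity)
    have hAnn : 0 ≤ A := by linarith
    have habs_int : IntegrableOn (fun x => |G x - A|) (Ioc (-ε) ε) volume :=
      (hGS_int.sub (integrableOn_const measure_Ioc_lt_top.ne)).abs
    have hneg_part : ∫ x in Ioc (-ε) (0:ℝ), |G x - A| = ε * A := by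
      rw [setIntegral_congr_fun measurableSet_Ioc (g := fun _ => A)
        (fun x hx => by
          have hx0 : x ≤ 0 := hx.2
          have : G x = 0 := by rw [hG]; dsimp only; rw [if_pos hx0]
          rw [this, zero_sub, abs_neg, abs_of_nonneg hAnn])]
      rw [setIntegral_const, measureReal_def, Real.volume_Ioc, ENNReal.toReal_ofReal (by linarith),
        smul_eq_mul]
      ring
    have hosc : ε * A ≤ ∫ x in Ioc (-ε) ε, |G x - A| := by
      rw [← hneg_part]
      exact setIntegral_mono_set habs_int (ae_of_all _ fun x => abs_nonneg _)
        (HasSubset.Subset.eventuallyLE (Ioc_subset_Ioc le_rfl (by linarith)))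
    have heq : ε - -ε = 2 * ε := by ring
    rw [heq]
    have hfin : (2 * ε)⁻¹ * (ε * A) = A / 2 := by
      field_simp
    calc M < A / 2 := by linarith
      _ = (2 * ε)⁻¹ * (ε * A) := hfin.symm
      _ ≤ (2 * ε)⁻¹ * ∫ x in Ioc (-ε) ε, |G x - A| :=
        mul_le_mul_of_nonneg_left hosc (by positivity)
end
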